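/- arXiv:2003.10255 — 16 statements merged into one kernel-verified Lean document; each statement's English description precedes it below -/
import Mathlib

section
/- Let $(L,\leq,0,1)$ be a bounded lattice, $e\in L\setminus\{0,1\}$, and $I_e=\{x\in L: x\parallel e\}$. Let $S_e$ be a t-conorm on $[e,1]$ and define $U_S(x,y)=0$ if $(x,y)\in[0,e)^2$; $S_e(x,y)$ if $(x,y)\in[e,1]^2$; $y$ if $(x,y)\in[e,1]\times I_e$; $x$ if $(x,y)\in I_e\times[e,1]$; and $x\wedge y$ otherwise. If $U_S$ is associative, then for all $y,z\in I_e$, either $y\wedge z\in I_e$ or $y\wedge z=0$. -/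
open Classical in
theorem stmt0 {L : Type*} [Lattice L] [BoundedOrder L] (e : L)
    (he0 : e ≠ ⊥) (he1 : e ≠ ⊤)
    (S : L → L → L)
    (hScl : ∀ x y, e ≤ x → e ≤ y → e ≤ S x y)
    (hScomm : ∀ x y, e ≤ x → e ≤ y → S x y = S y x)
    (hSassoc : ∀ x y z, e ≤ x → e ≤ y → e ≤ z → S (S x y) z = S x (S y z))
    (hSmono : ∀ x y z, e ≤ x → e ≤ y → e ≤ z → x ≤ y → S x z ≤ S y z)
    (hSe : ∀ x, e ≤ x → S e x = x ∧ S x e = x)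
    (U : L → L → L)
    (hU : ∀ x y, U x y =
      if x < e ∧ y < e then (⊥ : L)
      else if e ≤ x ∧ e ≤ y then S x y
      else if e ≤ x ∧ (¬ y ≤ e ∧ ¬ e ≤ y) then y
      else if (¬ x ≤ e ∧ ¬ e ≤ x) ∧ e ≤ y then x
      else x ⊓ y)
    (hassoc : ∀ x y z, U (U x y) z = U x (U y z)) :
    (∀ y z, (¬ y ≤ e ∧ ¬ e ≤ y) → (¬ z ≤ e ∧ ¬ e ≤ z) →
      (¬ y ⊓ z ≤ e ∧ ¬ e ≤ y ⊓ z) ∨ y ⊓ z = ⊥) := by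
  intro y z hy hz
  by_cases hwe : y ⊓ z ≤ e
  · right
    have hne : ¬ e ≤ y ⊓ z := fun h => hy.2 (h.trans inf_le_left)
    have hwlt : y ⊓ z < e := lt_of_le_of_ne hwe (fun h => hne (h ▸ le_refl e))
    have h1 : U (y ⊓ z) y = y ⊓ z := by
      rw [hU]
      rw [if_neg (fun h => hy.1 h.2.le), if_neg (fun h => hne h.1),
        if_neg (fun h => hne h.1), if_neg (fun h => h.1.1 hwe)]
      exact inf_eq_left.mpr inf_le_left
    have h2 : U (y ⊓ z) z = y ⊓ z := by
      rw [hU]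
      rw [if_neg (fun h => hz.1 h.2.le), if_neg (fun h => hne h.1),
        if_neg (fun h => hne h.1), if_neg (fun h => h.1.1 hwe)]
      exact inf_eq_left.mpr inf_le_right
    have h3 : U y z = y ⊓ z := by
      rw [hU]
      rw [if_neg (fun h => hy.1 h.1.le), if_neg (fun h => hy.2 h.1),
        if_neg (fun h => hy.2 h.1), if_neg (fun h => hz.2 h.2)]
    have h4 : U (y ⊓ z) (y ⊓ z) = ⊥ := by
      rw [hU, if_pos ⟨hwlt, hwlt⟩]
    have := hassoc (y ⊓ z) y z
    rw [h1, h2, h3, h4] at this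
    exact this
  · left
    exact ⟨hwe, fun h => hy.2 (h.trans inf_le_left)⟩
end

section
/- Let $(L,\leq,0,1)$ be a bounded lattice, $e\in L\setminus\{0,1\}$, and $I_e=\{x\in L: x\parallel e\}$. Suppose that for all $y,z\in I_e$, either $y\wedge z\in I_e$ or $y\wedge z=0$. Let $S_e$ be a t-conorm on $[e,1]$ and define $U_S(x,y)=0$ if $(x,y)\in[0,e)^2$; $S_e(x,y)$ if $(x,y)\in[e,1]^2$; $y$ if $(x,y)\in[e,1]\times I_e$; $x$ if $(x,y)\in I_e\times[e,1]$; and $x\wedge y$ otherwise. Then $U_S$ is a uninorm on $L$ with neutral element $e$. -/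
open Classical in
theorem stmt1 {L : Type*} [Lattice L] [BoundedOrder L] (e : L)
    (he0 : e ≠ ⊥) (he1 : e ≠ ⊤)
    (S : L → L → L)
    (hScl : ∀ x y, e ≤ x → e ≤ y → e ≤ S x y)
    (hScomm : ∀ x y, e ≤ x → e ≤ y → S x y = S y x)
    (hSassoc : ∀ x y z, e ≤ x → e ≤ y → e ≤ z → S (S x y) z = S x (S y z))
    (hSmono : ∀ x y z, e ≤ x → e ≤ y → e ≤ z → x ≤ y → S x z ≤ S y z)
    (hSe : ∀ x, e ≤ x → S e x = x ∧ S x e = x)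
    (U : L → L → L)
    (hU : ∀ x y, U x y =
      if x < e ∧ y < e then (⊥ : L)
      else if e ≤ x ∧ e ≤ y then S x y
      else if e ≤ x ∧ (¬ y ≤ e ∧ ¬ e ≤ y) then y
      else if (¬ x ≤ e ∧ ¬ e ≤ x) ∧ e ≤ y then x
      else x ⊓ y)
    (hcond : (∀ y z, (¬ y ≤ e ∧ ¬ e ≤ y) → (¬ z ≤ e ∧ ¬ e ≤ z) →
      (¬ y ⊓ z ≤ e ∧ ¬ e ≤ y ⊓ z) ∨ y ⊓ z = ⊥)) :
    ((∀ x y, U x y = U y x) ∧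
      (∀ x y z, U (U x y) z = U x (U y z)) ∧
      (∀ x y z, x ≤ y → U x z ≤ U y z ∧ U z x ≤ U z y) ∧
      (∀ x, U e x = x ∧ U x e = x)) := by
  have hbot : (⊥ : L) < e := bot_le.lt_of_ne (Ne.symm he0)
  have tri : ∀ x : L, x < e ∨ e ≤ x ∨ (¬ x ≤ e ∧ ¬ e ≤ x) := by
    intro x
    by_cases h1 : e ≤ x
    · exact Or.inr (Or.inl h1)
    by_cases h2 : x ≤ e
    · exact Or.inl (h2.lt_of_ne (by rintro rfl; exact h1 le_rfl))
    · exact Or.inr (Or.inr ⟨h2, h1⟩)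
  have hAA : ∀ x y, x < e → y < e → U x y = ⊥ := by
    intro x y hx hy; rw [hU]; exact if_pos ⟨hx, hy⟩
  have hAB : ∀ x y, x < e → e ≤ y → U x y = x := by
    intro x y hx hy
    rw [hU, if_neg (fun h => hy.not_gt h.2), if_neg (fun h => hx.not_ge h.1),
      if_neg (fun h => hx.not_ge h.1), if_neg (fun h => h.1.1 hx.le)]
    exact inf_eq_left.mpr (hx.le.trans hy)
  have hAC : ∀ x y, x < e → (¬ y ≤ e ∧ ¬ e ≤ y) → U x y = x ⊓ y := by
    intro x y hx hy
    rw [hU, if_neg (fun h => hy.1 h.2.le), if_neg (fun h => hx.not_ge h.1),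
      if_neg (fun h => hx.not_ge h.1), if_neg (fun h => hy.2 h.2)]
  have hBA : ∀ x y, e ≤ x → y < e → U x y = y := by
    intro x y hx hy
    rw [hU, if_neg (fun h => hx.not_gt h.1), if_neg (fun h => hy.not_ge h.2),
      if_neg (fun h => h.2.1 hy.le), if_neg (fun h => h.1.2 hx)]
    exact inf_eq_right.mpr (hy.le.trans hx)
  have hBB : ∀ x y, e ≤ x → e ≤ y → U x y = S x y := by
    intro x y hx hy
    rw [hU, if_neg (fun h => hx.not_gt h.1), if_pos ⟨hx, hy⟩]
  have hBC : ∀ x y, e ≤ x → (¬ y ≤ e ∧ ¬ e ≤ y) → U x y = y := by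
    intro x y hx hy
    rw [hU, if_neg (fun h => hx.not_gt h.1), if_neg (fun h => hy.2 h.2), if_pos ⟨hx, hy⟩]
  have hCA : ∀ x y, (¬ x ≤ e ∧ ¬ e ≤ x) → y < e → U x y = x ⊓ y := by
    intro x y hx hy
    rw [hU, if_neg (fun h => hx.1 h.1.le), if_neg (fun h => hx.2 h.1),
      if_neg (fun h => hx.2 h.1), if_neg (fun h => hy.not_ge h.2)]
  have hCB : ∀ x y, (¬ x ≤ e ∧ ¬ e ≤ x) → e ≤ y → U x y = x := by
    intro x y hx hy
    rw [hU, if_neg (fun h => hx.1 h.1.le), if_neg (fun h => hx.2 h.1),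
      if_neg (fun h => hx.2 h.1), if_pos ⟨hx, hy⟩]
  have hCC : ∀ x y, (¬ x ≤ e ∧ ¬ e ≤ x) → (¬ y ≤ e ∧ ¬ e ≤ y) → U x y = x ⊓ y := by
    intro x y hx hy
    rw [hU, if_neg (fun h => hx.1 h.1.le), if_neg (fun h => hx.2 h.1),
      if_neg (fun h => hx.2 h.1), if_neg (fun h => hy.2 h.2)]
  have hSle1 : ∀ x y, e ≤ x → e ≤ y → x ≤ S x y := by
    intro x y hx hy
    calc x = S e x := ((hSe x hx).1).symm
    _ ≤ S y x := hSmono e y x le_rfl hy hx hy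
    _ = S x y := hScomm y x hy hx
  have hcomm : ∀ x y, U x y = U y x := by
    intro x y
    rcases tri x with hx | hx | hx <;> rcases tri y with hy | hy | hy
    · rw [hAA x y hx hy, hAA y x hy hx]
    · rw [hAB x y hx hy, hBA y x hy hx]
    · rw [hAC x y hx hy, hCA y x hy hx, inf_comm]
    · rw [hBA x y hx hy, hAB y x hy hx]
    · rw [hBB x y hx hy, hBB y x hy hx, hScomm x y hx hy]
    · rw [hBC x y hx hy, hCB y x hy hx]
    · rw [hCA x y hx hy, hAC y x hy hx, inf_comm]
    · rw [hCB x y hx hy, hBC y x hy hx]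
    · rw [hCC x y hx hy, hCC y x hy hx, inf_comm]
  have hassoc : ∀ x y z, U (U x y) z = U x (U y z) := by
    intro x y z
    rcases tri x with hx | hx | hx <;> rcases tri y with hy | hy | hy <;>
      rcases tri z with hz | hz | hz
    · rw [hAA x y hx hy, hAA y z hy hz, hAA ⊥ z hbot hz, hAA x ⊥ hx hbot]
    · rw [hAA x y hx hy, hAB y z hy hz, hAB ⊥ z hbot hz, hAA x y hx hy]
    · rw [hAA x y hx hy, hAC y z hy hz, hAC ⊥ z hbot hz,
        hAA x (y ⊓ z) hx (inf_le_left.trans_lt hy), bot_inf_eq]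
    · rw [hAB x y hx hy, hBA y z hy hz]
    · rw [hAB x y hx hy, hBB y z hy hz, hAB x z hx hz, hAB x _ hx (hScl y z hy hz)]
    · rw [hAB x y hx hy, hBC y z hy hz]
    · rw [hAC x y hx hy, hCA y z hy hz, hAA _ z (inf_le_left.trans_lt hx) hz,
        hAA x _ hx (inf_le_right.trans_lt hz)]
    · rw [hAC x y hx hy, hCB y z hy hz, hAB _ z (inf_le_left.trans_lt hx) hz,
        hAC x y hx hy]
    · rcases hcond y z hy hz with h | h
      · rw [hAC x y hx hy, hCC y z hy hz, hAC _ z (inf_le_left.trans_lt hx) hz,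
          hAC x _ hx h, inf_assoc]
      · rw [hAC x y hx hy, hCC y z hy hz, h, hAC _ z (inf_le_left.trans_lt hx) hz,
          hAA x ⊥ hx hbot, inf_assoc, h, inf_bot_eq]
    · rw [hBA x y hx hy, hAA y z hy hz, hBA x ⊥ hx hbot]
    · rw [hBA x y hx hy, hAB y z hy hz, hBA x y hx hy]
    · rw [hBA x y hx hy, hAC y z hy hz, hBA x (y ⊓ z) hx (inf_le_left.trans_lt hy)]
    · rw [hBB x y hx hy, hBA y z hy hz, hBA _ z (hScl x y hx hy) hz, hBA x z hx hz]
    · rw [hBB x y hx hy, hBB y z hy hz, hBB _ z (hScl x y hx hy) hz,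
        hBB x _ hx (hScl y z hy hz)]
      exact hSassoc x y z hx hy hz
    · rw [hBB x y hx hy, hBC y z hy hz, hBC _ z (hScl x y hx hy) hz, hBC x z hx hz]
    · rw [hBC x y hx hy, hCA y z hy hz, hBA x _ hx (inf_le_right.trans_lt hz)]
    · rw [hBC x y hx hy, hCB y z hy hz, hBC x y hx hy]
    · rcases hcond y z hy hz with h | h
      · rw [hBC x y hx hy, hCC y z hy hz, hBC x _ hx h]
      · rw [hBC x y hx hy, hCC y z hy hz, h, hBA x ⊥ hx hbot]
    · rw [hCA x y hx hy, hAA y z hy hz, hAA _ z (inf_le_right.trans_lt hy) hz,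
        hCA x ⊥ hx hbot, inf_bot_eq]
    · rw [hCA x y hx hy, hAB y z hy hz, hAB _ z (inf_le_right.trans_lt hy) hz,
        hCA x y hx hy]
    · rw [hCA x y hx hy, hAC y z hy hz, hAC _ z (inf_le_right.trans_lt hy) hz,
        hCA x _ hx (inf_le_left.trans_lt hy), inf_assoc]
    · rw [hCB x y hx hy, hBA y z hy hz]
    · rw [hCB x y hx hy, hBB y z hy hz, hCB x z hx hz, hCB x _ hx (hScl y z hy hz)]
    · rw [hCB x y hx hy, hBC y z hy hz]
    · rcases hcond x y hx hy with h | h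
      · rw [hCC x y hx hy, hCA y z hy hz, hCA _ z h hz,
          hCA x _ hx (inf_le_right.trans_lt hz), inf_assoc]
      · rw [hCC x y hx hy, h, hCA y z hy hz, hAA ⊥ z hbot hz,
          hCA x _ hx (inf_le_right.trans_lt hz), ← inf_assoc, h, bot_inf_eq]
    · rcases hcond x y hx hy with h | h
      · rw [hCC x y hx hy, hCB y z hy hz, hCB _ z h hz, hCC x y hx hy]
      · rw [hCC x y hx hy, h, hCB y z hy hz, hAB ⊥ z hbot hz, hCC x y hx hy, h]
    · rcases hcond x y hx hy with h1 | h1 <;> rcases hcond y z hy hz with h2 | h2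
      · rw [hCC x y hx hy, hCC y z hy hz, hCC _ z h1 hz, hCC x _ hx h2, inf_assoc]
      · rw [hCC x y hx hy, hCC y z hy hz, h2, hCC _ z h1 hz, hCA x ⊥ hx hbot,
          inf_bot_eq, inf_assoc, h2, inf_bot_eq]
      · rw [hCC x y hx hy, h1, hCC y z hy hz, hAC ⊥ z hbot hz, bot_inf_eq,
          hCC x _ hx h2, ← inf_assoc, h1, bot_inf_eq]
      · rw [hCC x y hx hy, h1, hCC y z hy hz, h2, hAC ⊥ z hbot hz, bot_inf_eq,
          hCA x ⊥ hx hbot, inf_bot_eq]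
  have hmono1 : ∀ x y z, x ≤ y → U x z ≤ U y z := by
    intro x y z hxy
    rcases tri x with hx | hx | hx <;> rcases tri y with hy | hy | hy <;>
      rcases tri z with hz | hz | hz
    · rw [hAA x z hx hz, hAA y z hy hz]
    · rw [hAB x z hx hz, hAB y z hy hz]; exact hxy
    · rw [hAC x z hx hz, hAC y z hy hz]; exact inf_le_inf_right z hxy
    · rw [hAA x z hx hz]; exact bot_le
    · rw [hAB x z hx hz, hBB y z hy hz]; exact hx.le.trans (hScl y z hy hz)
    · rw [hAC x z hx hz, hBC y z hy hz]; exact inf_le_right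
    · rw [hAA x z hx hz]; exact bot_le
    · rw [hAB x z hx hz, hCB y z hy hz]; exact hxy
    · rw [hAC x z hx hz, hCC y z hy hz]; exact inf_le_inf_right z hxy
    · exact absurd (hx.trans hxy) hy.not_ge
    · exact absurd (hx.trans hxy) hy.not_ge
    · exact absurd (hx.trans hxy) hy.not_ge
    · rw [hBA x z hx hz, hBA y z hy hz]
    · rw [hBB x z hx hz, hBB y z hy hz]; exact hSmono x y z hx hy hz hxy
    · rw [hBC x z hx hz, hBC y z hy hz]
    · exact absurd (hx.trans hxy) hy.2
    · exact absurd (hx.trans hxy) hy.2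
    · exact absurd (hx.trans hxy) hy.2
    · exact absurd (hxy.trans hy.le) hx.1
    · exact absurd (hxy.trans hy.le) hx.1
    · exact absurd (hxy.trans hy.le) hx.1
    · rw [hCA x z hx hz, hBA y z hy hz]; exact inf_le_right
    · rw [hCB x z hx hz, hBB y z hy hz]; exact hxy.trans (hSle1 y z hy hz)
    · rw [hCC x z hx hz, hBC y z hy hz]; exact inf_le_right
    · rw [hCA x z hx hz, hCA y z hy hz]; exact inf_le_inf_right z hxy
    · rw [hCB x z hx hz, hCB y z hy hz]; exact hxy
    · rw [hCC x z hx hz, hCC y z hy hz]; exact inf_le_inf_right z hxy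
  refine ⟨hcomm, hassoc, fun x y z h => ⟨hmono1 x y z h, ?_⟩, fun x => ?_⟩
  · rw [hcomm z x, hcomm z y]; exact hmono1 x y z h
  · rcases tri x with hx | hx | hx
    · exact ⟨hBA e x le_rfl hx, hAB x e hx le_rfl⟩
    · rw [hBB e x le_rfl hx, hBB x e hx le_rfl]
      exact ⟨(hSe x hx).1, (hSe x hx).2⟩
    · exact ⟨hBC e x le_rfl hx, hCB x e hx le_rfl⟩
end

section
/- Let $(L,\leq,0,1)$ be a bounded lattice, $e\in L\setminus\{0,1\}$, $I_e=\{x: x\parallel e\}$, and let $S_e$ be a t-conorm on $[e,1]$. Define $U_S$ by: $0$ on $[0,e)^2$; $S_e(x,y)$ on $[e,1]^2$; $y$ on $[e,1]\times I_e$; $x$ on $I_e\times[e,1]$; $x\wedge y$ otherwise. Then $U_S$ is a uninorm on $L$ with neutral element $e$ if and only if $\{y\wedge z : y,z\in I_e\}\subseteq I_e\cup\{0\}$. -/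
open Classical in
theorem stmt2 {L : Type*} [Lattice L] [BoundedOrder L] (e : L)
    (he0 : e ≠ ⊥) (he1 : e ≠ ⊤)
    (S : L → L → L)
    (hScl : ∀ x y, e ≤ x → e ≤ y → e ≤ S x y)
    (hScomm : ∀ x y, e ≤ x → e ≤ y → S x y = S y x)
    (hSassoc : ∀ x y z, e ≤ x → e ≤ y → e ≤ z → S (S x y) z = S x (S y z))
    (hSmono : ∀ x y z, e ≤ x → e ≤ y → e ≤ z → x ≤ y → S x z ≤ S y z)
    (hSe : ∀ x, e ≤ x → S e x = x ∧ S x e = x)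
    (U : L → L → L)
    (hU : ∀ x y, U x y =
      if x < e ∧ y < e then (⊥ : L)
      else if e ≤ x ∧ e ≤ y then S x y
      else if e ≤ x ∧ (¬ y ≤ e ∧ ¬ e ≤ y) then y
      else if (¬ x ≤ e ∧ ¬ e ≤ x) ∧ e ≤ y then x
      else x ⊓ y) :
    ((∀ x y, U x y = U y x) ∧
      (∀ x y z, U (U x y) z = U x (U y z)) ∧
      (∀ x y z, x ≤ y → U x z ≤ U y z ∧ U z x ≤ U z y) ∧
      (∀ x, U e x = x ∧ U x e = x)) ↔
    (∀ y z, (¬ y ≤ e ∧ ¬ e ≤ y) → (¬ z ≤ e ∧ ¬ e ≤ z) →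
      (¬ y ⊓ z ≤ e ∧ ¬ e ≤ y ⊓ z) ∨ y ⊓ z = ⊥) := by
  have hbe : (⊥ : L) < e := Ne.bot_lt he0
  -- value lemmas: A = below e, B = above-or-equal e, C = incomparable to e
  have vAA : ∀ x y, x < e → y < e → U x y = ⊥ := fun x y hx hy => by
    rw [hU, if_pos ⟨hx, hy⟩]
  have vBB : ∀ x y, e ≤ x → e ≤ y → U x y = S x y := fun x y hx hy => by
    rw [hU, if_neg (fun h => lt_irrefl e (hx.trans_lt h.1)), if_pos ⟨hx, hy⟩]
  have vBC : ∀ x y, e ≤ x → (¬ y ≤ e ∧ ¬ e ≤ y) → U x y = y := fun x y hx hy => by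
    rw [hU, if_neg (fun h => hy.1 h.2.le), if_neg (fun h => hy.2 h.2), if_pos ⟨hx, hy⟩]
  have vCB : ∀ x y, (¬ x ≤ e ∧ ¬ e ≤ x) → e ≤ y → U x y = x := fun x y hx hy => by
    rw [hU, if_neg (fun h => hx.1 h.1.le), if_neg (fun h => hx.2 h.1),
      if_neg (fun h => hx.2 h.1), if_pos ⟨hx, hy⟩]
  have vAB : ∀ x y, x < e → e ≤ y → U x y = x := fun x y hx hy => by
    rw [hU, if_neg (fun h => lt_irrefl e (hy.trans_lt h.2)),
      if_neg (fun h => lt_irrefl e (h.1.trans_lt hx)),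
      if_neg (fun h => lt_irrefl e (h.1.trans_lt hx)),
      if_neg (fun h => h.1.1 hx.le)]
    exact inf_eq_left.2 (hx.le.trans hy)
  have vBA : ∀ x y, e ≤ x → y < e → U x y = y := fun x y hx hy => by
    rw [hU, if_neg (fun h => lt_irrefl e (hx.trans_lt h.1)),
      if_neg (fun h => lt_irrefl e (h.2.trans_lt hy)),
      if_neg (fun h => h.2.1 hy.le),
      if_neg (fun h => h.1.2 hx)]
    exact inf_eq_right.2 (hy.le.trans hx)
  have vAC : ∀ x y, x < e → (¬ y ≤ e ∧ ¬ e ≤ y) → U x y = x ⊓ y := fun x y hx hy => by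
    rw [hU, if_neg (fun h => hy.1 h.2.le),
      if_neg (fun h => lt_irrefl e (h.1.trans_lt hx)),
      if_neg (fun h => lt_irrefl e (h.1.trans_lt hx)),
      if_neg (fun h => h.1.1 hx.le)]
  have vCA : ∀ x y, (¬ x ≤ e ∧ ¬ e ≤ x) → y < e → U x y = x ⊓ y := fun x y hx hy => by
    rw [hU, if_neg (fun h => hx.1 h.1.le), if_neg (fun h => hx.2 h.1),
      if_neg (fun h => hx.2 h.1),
      if_neg (fun h => lt_irrefl e (h.2.trans_lt hy))]
  have vCC : ∀ x y, (¬ x ≤ e ∧ ¬ e ≤ x) → (¬ y ≤ e ∧ ¬ e ≤ y) → U x y = x ⊓ y :=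
    fun x y hx hy => by
    rw [hU, if_neg (fun h => hx.1 h.1.le), if_neg (fun h => hx.2 h.1),
      if_neg (fun h => hx.2 h.1), if_neg (fun h => hy.2 h.2)]
  have tri : ∀ a : L, a < e ∨ e ≤ a ∨ (¬ a ≤ e ∧ ¬ e ≤ a) := fun a => by
    by_cases h1 : e ≤ a
    · exact Or.inr (Or.inl h1)
    by_cases h2 : a ≤ e
    · exact Or.inl (lt_of_le_of_ne h2 (fun h => h1 h.ge))
    · exact Or.inr (Or.inr ⟨h2, h1⟩)
  constructor
  · -- forward direction
    rintro ⟨hcomm, hassoc, hmono, hid⟩ y z hy hz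
    by_cases hbot : y ⊓ z = ⊥
    · exact Or.inr hbot
    refine Or.inl ⟨?_, fun h => hy.2 (h.trans inf_le_left)⟩
    intro hle
    have h2 : ¬ e ≤ y ⊓ z := fun h => hy.2 (h.trans inf_le_left)
    have ha : y ⊓ z < e := lt_of_le_of_ne hle (fun h => h2 h.ge)
    have key := hassoc y z (y ⊓ z)
    rw [vCC y z hy hz, vAA (y ⊓ z) (y ⊓ z) ha ha, vCA z (y ⊓ z) hz ha,
      inf_eq_right.2 (inf_le_right : y ⊓ z ≤ z), vCA y (y ⊓ z) hy ha,
      inf_eq_right.2 (inf_le_left : y ⊓ z ≤ y)] at key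
    exact hbot key.symm
  · -- backward direction
    intro hC
    have hid : ∀ x, U e x = x ∧ U x e = x := fun x => by
      rcases tri x with hx | hx | hx
      · exact ⟨vBA e x le_rfl hx, vAB x e hx le_rfl⟩
      · rw [vBB e x le_rfl hx, vBB x e hx le_rfl]
        exact ⟨(hSe x hx).1, (hSe x hx).2⟩
      · exact ⟨vBC e x le_rfl hx, vCB x e hx le_rfl⟩
    have hcomm : ∀ x y, U x y = U y x := fun x y => by
      rcases tri x with hx | hx | hx
      · rcases tri y with hy | hy | hy
        · rw [vAA x y hx hy, vAA y x hy hx]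
        · rw [vAB x y hx hy, vBA y x hy hx]
        · rw [vAC x y hx hy, vCA y x hy hx, inf_comm x y]
      · rcases tri y with hy | hy | hy
        · rw [vBA x y hx hy, vAB y x hy hx]
        · rw [vBB x y hx hy, vBB y x hy hx]; exact hScomm x y hx hy
        · rw [vBC x y hx hy, vCB y x hy hx]
      · rcases tri y with hy | hy | hy
        · rw [vCA x y hx hy, vAC y x hy hx, inf_comm x y]
        · rw [vCB x y hx hy, vBC y x hy hx]
        · rw [vCC x y hx hy, vCC y x hy hx, inf_comm x y]
    have hmono1 : ∀ x y z : L, x ≤ y → U x z ≤ U y z := by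
      intro x y z hxy
      rcases tri x with hx | hx | hx
      · rcases tri y with hy | hy | hy
        · rcases tri z with hz | hz | hz
          · rw [vAA x z hx hz, vAA y z hy hz]
          · rw [vAB x z hx hz, vAB y z hy hz]; exact hxy
          · rw [vAC x z hx hz, vAC y z hy hz]; exact inf_le_inf_right z hxy
        · rcases tri z with hz | hz | hz
          · rw [vAA x z hx hz, vBA y z hy hz]; exact bot_le
          · rw [vAB x z hx hz, vBB y z hy hz]; exact hx.le.trans (hScl y z hy hz)
          · rw [vAC x z hx hz, vBC y z hy hz]; exact inf_le_right
        · rcases tri z with hz | hz | hz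
          · rw [vAA x z hx hz, vCA y z hy hz]; exact bot_le
          · rw [vAB x z hx hz, vCB y z hy hz]; exact hxy
          · rw [vAC x z hx hz, vCC y z hy hz]; exact inf_le_inf_right z hxy
      · rcases tri y with hy | hy | hy
        · exact absurd (hx.trans hxy) hy.not_ge
        · rcases tri z with hz | hz | hz
          · rw [vBA x z hx hz, vBA y z hy hz]
          · rw [vBB x z hx hz, vBB y z hy hz]; exact hSmono x y z hx hy hz hxy
          · rw [vBC x z hx hz, vBC y z hy hz]
        · exact absurd (hx.trans hxy) hy.2
      · rcases tri y with hy | hy | hy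
        · exact absurd (hxy.trans hy.le) hx.1
        · rcases tri z with hz | hz | hz
          · rw [vCA x z hx hz, vBA y z hy hz]; exact inf_le_right
          · rw [vCB x z hx hz, vBB y z hy hz]
            have h1 : y ≤ S y z := by
              have h2 := hSmono e z y le_rfl hz hy hz
              rwa [(hSe y hy).1, hScomm z y hz hy] at h2
            exact hxy.trans h1
          · rw [vCC x z hx hz, vBC y z hy hz]; exact inf_le_right
        · rcases tri z with hz | hz | hz
          · rw [vCA x z hx hz, vCA y z hy hz]; exact inf_le_inf_right z hxy
          · rw [vCB x z hx hz, vCB y z hy hz]; exact hxy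
          · rw [vCC x z hx hz, vCC y z hy hz]; exact inf_le_inf_right z hxy
    have hassoc : ∀ x y z, U (U x y) z = U x (U y z) := by
      intro x y z
      rcases tri x with hx | hx | hx
      · rcases tri y with hy | hy | hy
        · rcases tri z with hz | hz | hz
          · rw [vAA x y hx hy, vAA y z hy hz, vAA ⊥ z hbe hz, vAA x ⊥ hx hbe]
          · rw [vAB y z hy hz, vAA x y hx hy, vAB ⊥ z hbe hz]
          · rw [vAC y z hy hz, vAA x y hx hy, vAC ⊥ z hbe hz,
              vAA x (y ⊓ z) hx (inf_le_left.trans_lt hy), bot_inf_eq]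
        · rcases tri z with hz | hz | hz
          · rw [vAB x y hx hy, vBA y z hy hz, vAA x z hx hz]
          · rw [vBB y z hy hz, vAB x y hx hy, vAB x z hx hz,
              vAB x (S y z) hx (hScl y z hy hz)]
          · rw [vAB x y hx hy, vBC y z hy hz]
        · rcases tri z with hz | hz | hz
          · rw [vCA y z hy hz, vAC x y hx hy,
              vAA (x ⊓ y) z (inf_le_left.trans_lt hx) hz,
              vAA x (y ⊓ z) hx (inf_le_right.trans_lt hz)]
          · rw [vCB y z hy hz, vAC x y hx hy,
              vAB (x ⊓ y) z (inf_le_left.trans_lt hx) hz]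
          · rw [vCC y z hy hz, vAC x y hx hy,
              vAC (x ⊓ y) z (inf_le_left.trans_lt hx) hz]
            rcases hC y z hy hz with h | h
            · rw [vAC x (y ⊓ z) hx h, inf_assoc]
            · rw [h, vAA x ⊥ hx hbe, inf_assoc, h, inf_bot_eq]
      · rcases tri y with hy | hy | hy
        · rcases tri z with hz | hz | hz
          · rw [vBA x y hx hy, vAA y z hy hz, vBA x ⊥ hx hbe]
          · rw [vBA x y hx hy, vAB y z hy hz, vBA x y hx hy]
          · rw [vBA x y hx hy, vAC y z hy hz,
              vBA x (y ⊓ z) hx (inf_le_left.trans_lt hy)]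
        · rcases tri z with hz | hz | hz
          · rw [vBA y z hy hz, vBB x y hx hy,
              vBA (S x y) z (hScl x y hx hy) hz, vBA x z hx hz]
          · rw [vBB x y hx hy, vBB y z hy hz, vBB (S x y) z (hScl x y hx hy) hz,
              vBB x (S y z) hx (hScl y z hy hz)]
            exact hSassoc x y z hx hy hz
          · rw [vBC y z hy hz, vBB x y hx hy,
              vBC (S x y) z (hScl x y hx hy) hz, vBC x z hx hz]
        · rcases tri z with hz | hz | hz
          · rw [vBC x y hx hy, vCA y z hy hz,
              vBA x (y ⊓ z) hx (inf_le_right.trans_lt hz)]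
          · rw [vBC x y hx hy, vCB y z hy hz, vBC x y hx hy]
          · rw [vBC x y hx hy, vCC y z hy hz]
            rcases hC y z hy hz with h | h
            · rw [vBC x (y ⊓ z) hx h]
            · rw [h, vBA x ⊥ hx hbe]
      · rcases tri y with hy | hy | hy
        · rcases tri z with hz | hz | hz
          · rw [vAA y z hy hz, vCA x y hx hy,
              vAA (x ⊓ y) z (inf_le_right.trans_lt hy) hz, vCA x ⊥ hx hbe, inf_bot_eq]
          · rw [vAB y z hy hz, vCA x y hx hy,
              vAB (x ⊓ y) z (inf_le_right.trans_lt hy) hz]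
          · rw [vAC y z hy hz, vCA x y hx hy,
              vAC (x ⊓ y) z (inf_le_right.trans_lt hy) hz,
              vCA x (y ⊓ z) hx (inf_le_left.trans_lt hy), inf_assoc]
        · rcases tri z with hz | hz | hz
          · rw [vCB x y hx hy, vBA y z hy hz]
          · rw [vBB y z hy hz, vCB x y hx hy, vCB x z hx hz,
              vCB x (S y z) hx (hScl y z hy hz)]
          · rw [vCB x y hx hy, vBC y z hy hz]
        · rcases tri z with hz | hz | hz
          · rw [vCA y z hy hz, vCC x y hx hy,
              vCA x (y ⊓ z) hx (inf_le_right.trans_lt hz)]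
            rcases hC x y hx hy with h | h
            · rw [vCA (x ⊓ y) z h hz, inf_assoc]
            · rw [h, vAA ⊥ z hbe hz, ← inf_assoc, h, bot_inf_eq]
          · rw [vCB y z hy hz, vCC x y hx hy]
            rcases hC x y hx hy with h | h
            · rw [vCB (x ⊓ y) z h hz]
            · rw [h, vAB ⊥ z hbe hz]
          · rw [vCC x y hx hy, vCC y z hy hz]
            rcases hC x y hx hy with h1 | h1 <;> rcases hC y z hy hz with h2 | h2
            · rw [vCC (x ⊓ y) z h1 hz, vCC x (y ⊓ z) hx h2, inf_assoc]
            · rw [h2, vCC (x ⊓ y) z h1 hz, vCA x ⊥ hx hbe, inf_assoc, h2]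
            · rw [h1, vAC ⊥ z hbe hz, vCC x (y ⊓ z) hx h2, bot_inf_eq,
                ← inf_assoc, h1, bot_inf_eq]
            · rw [h1, h2, vAC ⊥ z hbe hz, vCA x ⊥ hx hbe, bot_inf_eq, inf_bot_eq]
    exact ⟨hcomm, hassoc,
      fun x y z h => ⟨hmono1 x y z h, by rw [hcomm z x, hcomm z y]; exact hmono1 x y z h⟩,
      hid⟩
end

section
/- Let $(L,\leq,0,1)$ be a bounded lattice, $e\in L\setminus\{0,1\}$, $I_e=\{x: x\parallel e\}$, and let $T_e$ be a t-norm on $[0,e]$. Define $U_t(x,y)=T_e(x,y)$ if $(x,y)\in[0,e]^2$; $x\vee y$ if $(x,y)\in([0,e]\times(e,1])\cup((e,1]\times[0,e])\cup(I_e\times I_e)$; $y$ if $(x,y)\in[0,e]\times I_e$; $x$ if $(x,y)\in I_e\times[0,e]$; and $1$ otherwise. If $U_t$ is associative, then for all $y,z\in I_e$, either $y\vee z\in I_e$ or $y\vee z=1$. -/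
open Classical in
theorem stmt4 {L : Type*} [Lattice L] [BoundedOrder L] (e : L)
    (he0 : e ≠ ⊥) (he1 : e ≠ ⊤)
    (T : L → L → L)
    (hTcl : ∀ x y, x ≤ e → y ≤ e → T x y ≤ e)
    (hTcomm : ∀ x y, x ≤ e → y ≤ e → T x y = T y x)
    (hTassoc : ∀ x y z, x ≤ e → y ≤ e → z ≤ e → T (T x y) z = T x (T y z))
    (hTmono : ∀ x y z, x ≤ e → y ≤ e → z ≤ e → x ≤ y → T x z ≤ T y z)
    (hTe : ∀ x, x ≤ e → T e x = x ∧ T x e = x)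
    (U : L → L → L)
    (hU : ∀ x y, U x y =
      if x ≤ e ∧ y ≤ e then T x y
      else if (x ≤ e ∧ e < y) ∨ (e < x ∧ y ≤ e) ∨
          ((¬ x ≤ e ∧ ¬ e ≤ x) ∧ (¬ y ≤ e ∧ ¬ e ≤ y)) then x ⊔ y
      else if x ≤ e ∧ (¬ y ≤ e ∧ ¬ e ≤ y) then y
      else if (¬ x ≤ e ∧ ¬ e ≤ x) ∧ y ≤ e then x
      else (⊤ : L))
    (hassoc : ∀ x y z, U (U x y) z = U x (U y z)) :
    (∀ y z, (¬ y ≤ e ∧ ¬ e ≤ y) → (¬ z ≤ e ∧ ¬ e ≤ z) →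
      (¬ y ⊔ z ≤ e ∧ ¬ e ≤ y ⊔ z) ∨ y ⊔ z = ⊤) := by
  intro y z hy hz
  have hse : ¬ y ⊔ z ≤ e := fun h => hy.1 (le_trans le_sup_left h)
  by_cases hes : e ≤ y ⊔ z
  · right
    have hUyz : U y z = y ⊔ z := by
      rw [hU]
      simp [hy.1, hy.2, hz.1, hz.2]
    have hUzz : U z z = z := by
      rw [hU]
      simp [hz.1, hz.2]
    have hUsz : U (y ⊔ z) z = ⊤ := by
      rw [hU]
      simp [hse, hes, hz.1]
    have := hassoc y z z
    rw [hUyz, hUzz, hUyz, hUsz] at this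
    exact this.symm
  · exact Or.inl ⟨hse, hes⟩
end

section
/- Let $(L,\leq,0,1)$ be a bounded lattice, $e\in L\setminus\{0,1\}$, $I_e=\{x: x\parallel e\}$, and suppose that for all $y,z\in I_e$, either $y\vee z\in I_e$ or $y\vee z=1$. Let $T_e$ be a t-norm on $[0,e]$ and define $U_t(x,y)=T_e(x,y)$ on $[0,e]^2$; $x\vee y$ on $([0,e]\times(e,1])\cup((e,1]\times[0,e])\cup(I_e\times I_e)$; $y$ on $[0,e]\times I_e$; $x$ on $I_e\times[0,e]$; $1$ otherwise. Then $U_t$ is a uninorm on $L$ with neutral element $e$. -/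
open Classical in
theorem stmt5 {L : Type*} [Lattice L] [BoundedOrder L] (e : L)
    (he0 : e ≠ ⊥) (he1 : e ≠ ⊤)
    (T : L → L → L)
    (hTcl : ∀ x y, x ≤ e → y ≤ e → T x y ≤ e)
    (hTcomm : ∀ x y, x ≤ e → y ≤ e → T x y = T y x)
    (hTassoc : ∀ x y z, x ≤ e → y ≤ e → z ≤ e → T (T x y) z = T x (T y z))
    (hTmono : ∀ x y z, x ≤ e → y ≤ e → z ≤ e → x ≤ y → T x z ≤ T y z)
    (hTe : ∀ x, x ≤ e → T e x = x ∧ T x e = x)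
    (U : L → L → L)
    (hU : ∀ x y, U x y =
      if x ≤ e ∧ y ≤ e then T x y
      else if (x ≤ e ∧ e < y) ∨ (e < x ∧ y ≤ e) ∨
          ((¬ x ≤ e ∧ ¬ e ≤ x) ∧ (¬ y ≤ e ∧ ¬ e ≤ y)) then x ⊔ y
      else if x ≤ e ∧ (¬ y ≤ e ∧ ¬ e ≤ y) then y
      else if (¬ x ≤ e ∧ ¬ e ≤ x) ∧ y ≤ e then x
      else (⊤ : L))
    (hcond : (∀ y z, (¬ y ≤ e ∧ ¬ e ≤ y) → (¬ z ≤ e ∧ ¬ e ≤ z) →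
      (¬ y ⊔ z ≤ e ∧ ¬ e ≤ y ⊔ z) ∨ y ⊔ z = ⊤)) :
    ((∀ x y, U x y = U y x) ∧
      (∀ x y z, U (U x y) z = U x (U y z)) ∧
      (∀ x y z, x ≤ y → U x z ≤ U y z ∧ U z x ≤ U z y) ∧
      (∀ x, U e x = x ∧ U x e = x)) := by
  have htop : e < ⊤ := lt_top_iff_ne_top.mpr he1
  have tri : ∀ x : L, x ≤ e ∨ e < x ∨ (¬ x ≤ e ∧ ¬ e ≤ x) := by
    intro x
    by_cases h1 : x ≤ e
    · exact Or.inl h1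
    · by_cases h2 : e ≤ x
      · exact Or.inr (Or.inl (lt_of_le_not_ge h2 h1))
      · exact Or.inr (Or.inr ⟨h1, h2⟩)
  -- case lemmas
  have UAA : ∀ x y, x ≤ e → y ≤ e → U x y = T x y := by
    intro x y hx hy
    rw [hU x y, if_pos ⟨hx, hy⟩]
  have UAB : ∀ x y, x ≤ e → e < y → U x y = y := by
    intro x y hx hy
    rw [hU x y, if_neg (fun h => hy.not_ge h.2), if_pos (Or.inl ⟨hx, hy⟩)]
    exact sup_eq_right.mpr (hx.trans hy.le)
  have UBA : ∀ x y, e < x → y ≤ e → U x y = x := by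
    intro x y hx hy
    rw [hU x y, if_neg (fun h => hx.not_ge h.1), if_pos (Or.inr (Or.inl ⟨hx, hy⟩))]
    exact sup_eq_left.mpr (hy.trans hx.le)
  have UAC : ∀ x y, x ≤ e → (¬ y ≤ e ∧ ¬ e ≤ y) → U x y = y := by
    intro x y hx hy
    have h2 : ¬ ((x ≤ e ∧ e < y) ∨ (e < x ∧ y ≤ e) ∨
        ((¬ x ≤ e ∧ ¬ e ≤ x) ∧ (¬ y ≤ e ∧ ¬ e ≤ y))) := by
      rintro (⟨_, h2⟩ | ⟨h1, _⟩ | ⟨hx', _⟩)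
      exacts [hy.2 h2.le, h1.not_ge hx, hx'.1 hx]
    rw [hU x y, if_neg (fun h => hy.1 h.2), if_neg h2, if_pos ⟨hx, hy⟩]
  have UCA : ∀ x y, (¬ x ≤ e ∧ ¬ e ≤ x) → y ≤ e → U x y = x := by
    intro x y hx hy
    have h2 : ¬ ((x ≤ e ∧ e < y) ∨ (e < x ∧ y ≤ e) ∨
        ((¬ x ≤ e ∧ ¬ e ≤ x) ∧ (¬ y ≤ e ∧ ¬ e ≤ y))) := by
      rintro (⟨h1, _⟩ | ⟨h1, _⟩ | ⟨_, hy'⟩)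
      exacts [hx.1 h1, hx.2 h1.le, hy'.1 hy]
    rw [hU x y, if_neg (fun h => hx.1 h.1), if_neg h2,
      if_neg (fun h => hx.1 h.1), if_pos ⟨hx, hy⟩]
  have UCC : ∀ x y, (¬ x ≤ e ∧ ¬ e ≤ x) → (¬ y ≤ e ∧ ¬ e ≤ y) → U x y = x ⊔ y := by
    intro x y hx hy
    rw [hU x y, if_neg (fun h => hx.1 h.1), if_pos (Or.inr (Or.inr ⟨hx, hy⟩))]
  have UBB : ∀ x y, e < x → e < y → U x y = ⊤ := by
    intro x y hx hy
    have h2 : ¬ ((x ≤ e ∧ e < y) ∨ (e < x ∧ y ≤ e) ∨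
        ((¬ x ≤ e ∧ ¬ e ≤ x) ∧ (¬ y ≤ e ∧ ¬ e ≤ y))) := by
      rintro (⟨h1, _⟩ | ⟨_, h2⟩ | ⟨⟨_, h3⟩, _⟩)
      exacts [hx.not_ge h1, hy.not_ge h2, h3 hx.le]
    rw [hU x y, if_neg (fun h => hx.not_ge h.1), if_neg h2,
      if_neg (fun h => hx.not_ge h.1), if_neg (fun h => h.1.2 hx.le)]
  have UBC : ∀ x y, e < x → (¬ y ≤ e ∧ ¬ e ≤ y) → U x y = ⊤ := by
    intro x y hx hy
    have h2 : ¬ ((x ≤ e ∧ e < y) ∨ (e < x ∧ y ≤ e) ∨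
        ((¬ x ≤ e ∧ ¬ e ≤ x) ∧ (¬ y ≤ e ∧ ¬ e ≤ y))) := by
      rintro (⟨h1, _⟩ | ⟨_, h2⟩ | ⟨⟨_, h3⟩, _⟩)
      exacts [hx.not_ge h1, hy.1 h2, h3 hx.le]
    rw [hU x y, if_neg (fun h => hx.not_ge h.1), if_neg h2,
      if_neg (fun h => hx.not_ge h.1), if_neg (fun h => hy.1 h.2)]
  have UCB : ∀ x y, (¬ x ≤ e ∧ ¬ e ≤ x) → e < y → U x y = ⊤ := by
    intro x y hx hy
    have h2 : ¬ ((x ≤ e ∧ e < y) ∨ (e < x ∧ y ≤ e) ∨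
        ((¬ x ≤ e ∧ ¬ e ≤ x) ∧ (¬ y ≤ e ∧ ¬ e ≤ y))) := by
      rintro (⟨h1, _⟩ | ⟨h1, _⟩ | ⟨_, _, h3⟩)
      exacts [hx.1 h1, hx.2 h1.le, h3 hy.le]
    rw [hU x y, if_neg (fun h => hx.1 h.1), if_neg h2,
      if_neg (fun h => hx.1 h.1), if_neg (fun h => hy.not_ge h.2)]
  -- top absorbing
  have Utopl : ∀ z, U ⊤ z = ⊤ := by
    intro z
    rcases tri z with hz | hz | hz
    · exact UBA ⊤ z htop hz
    · exact UBB ⊤ z htop hz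
    · exact UBC ⊤ z htop hz
  have Utopr : ∀ z, U z ⊤ = ⊤ := by
    intro z
    rcases tri z with hz | hz | hz
    · exact UAB z ⊤ hz htop
    · exact UBB z ⊤ hz htop
    · exact UCB z ⊤ hz htop
  -- helpers for "incomparable or top" second/first argument
  have hRA : ∀ x w, x ≤ e → ((¬ w ≤ e ∧ ¬ e ≤ w) ∨ w = ⊤) → U x w = w := by
    intro x w hx hw
    rcases hw with hw | rfl
    · exact UAC x w hx hw
    · exact UAB x ⊤ hx htop
  have hRA' : ∀ w z, ((¬ w ≤ e ∧ ¬ e ≤ w) ∨ w = ⊤) → z ≤ e → U w z = w := by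
    intro w z hw hz
    rcases hw with hw | rfl
    · exact UCA w z hw hz
    · exact Utopl z
  have hRB : ∀ x w, e < x → ((¬ w ≤ e ∧ ¬ e ≤ w) ∨ w = ⊤) → U x w = ⊤ := by
    intro x w hx hw
    rcases hw with hw | rfl
    · exact UBC x w hx hw
    · exact Utopr x
  have hRB' : ∀ w z, ((¬ w ≤ e ∧ ¬ e ≤ w) ∨ w = ⊤) → e < z → U w z = ⊤ := by
    intro w z hw hz
    rcases hw with hw | rfl
    · exact UCB w z hw hz
    · exact Utopl z
  have hRC : ∀ x w, (¬ x ≤ e ∧ ¬ e ≤ x) → ((¬ w ≤ e ∧ ¬ e ≤ w) ∨ w = ⊤) →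
      U x w = x ⊔ w := by
    intro x w hx hw
    rcases hw with hw | rfl
    · exact UCC x w hx hw
    · rw [Utopr x]; simp
  have hRC' : ∀ w z, ((¬ w ≤ e ∧ ¬ e ≤ w) ∨ w = ⊤) → (¬ z ≤ e ∧ ¬ e ≤ z) →
      U w z = w ⊔ z := by
    intro w z hw hz
    rcases hw with hw | rfl
    · exact UCC w z hw hz
    · rw [Utopl z]; simp
  -- commutativity
  have hcomm : ∀ x y, U x y = U y x := by
    intro x y
    rcases tri x with hx | hx | hx <;> rcases tri y with hy | hy | hy
    · rw [UAA x y hx hy, UAA y x hy hx]; exact hTcomm x y hx hy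
    · rw [UAB x y hx hy, UBA y x hy hx]
    · rw [UAC x y hx hy, UCA y x hy hx]
    · rw [UBA x y hx hy, UAB y x hy hx]
    · rw [UBB x y hx hy, UBB y x hy hx]
    · rw [UBC x y hx hy, UCB y x hy hx]
    · rw [UCA x y hx hy, UAC y x hy hx]
    · rw [UCB x y hx hy, UBC y x hy hx]
    · rw [UCC x y hx hy, UCC y x hy hx]; exact sup_comm x y
  -- monotonicity in first argument
  have hmono1 : ∀ x y z, x ≤ y → U x z ≤ U y z := by
    intro x y z hxy
    rcases tri x with hx | hx | hx <;> rcases tri y with hy | hy | hy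
    · -- x ≤ e, y ≤ e
      rcases tri z with hz | hz | hz
      · rw [UAA x z hx hz, UAA y z hy hz]; exact hTmono x y z hx hy hz hxy
      · rw [UAB x z hx hz, UAB y z hy hz]
      · rw [UAC x z hx hz, UAC y z hy hz]
    · -- x ≤ e, e < y
      rcases tri z with hz | hz | hz
      · rw [UAA x z hx hz, UBA y z hy hz]; exact (hTcl x z hx hz).trans hy.le
      · rw [UAB x z hx hz, UBB y z hy hz]; exact le_top
      · rw [UAC x z hx hz, UBC y z hy hz]; exact le_top
    · -- x ≤ e, y incomparable
      rcases tri z with hz | hz | hz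
      · rw [UAA x z hx hz, UCA y z hy hz]
        have h1 : T x z ≤ x := by
          rw [hTcomm x z hx hz]
          exact (hTmono z e x hz le_rfl hx hz).trans (hTe x hx).1.le
        exact h1.trans hxy
      · rw [UAB x z hx hz, UCB y z hy hz]; exact le_top
      · rw [UAC x z hx hz, UCC y z hy hz]; exact le_sup_right
    · exact absurd (hxy.trans hy) hx.not_ge
    · -- e < x, e < y
      rcases tri z with hz | hz | hz
      · rw [UBA x z hx hz, UBA y z hy hz]; exact hxy
      · rw [UBB x z hx hz, UBB y z hy hz]
      · rw [UBC x z hx hz, UBC y z hy hz]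
    · exact absurd (hx.le.trans hxy) hy.2
    · exact absurd (hxy.trans hy) hx.1
    · -- x incomparable, e < y
      rcases tri z with hz | hz | hz
      · rw [UCA x z hx hz, UBA y z hy hz]; exact hxy
      · rw [UCB x z hx hz, UBB y z hy hz]
      · rw [UCC x z hx hz, UBC y z hy hz]; exact le_top
    · -- both incomparable
      rcases tri z with hz | hz | hz
      · rw [UCA x z hx hz, UCA y z hy hz]; exact hxy
      · rw [UCB x z hx hz, UCB y z hy hz]
      · rw [UCC x z hx hz, UCC y z hy hz]; exact sup_le_sup_right hxy z
  refine ⟨hcomm, ?_, ?_, ?_⟩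
  · -- associativity
    intro x y z
    rcases tri x with hx | hx | hx <;> rcases tri y with hy | hy | hy <;>
      rcases tri z with hz | hz | hz
    · rw [UAA x y hx hy, UAA y z hy hz, UAA _ z (hTcl x y hx hy) hz,
        UAA x _ hx (hTcl y z hy hz)]
      exact hTassoc x y z hx hy hz
    · rw [UAA x y hx hy, UAB y z hy hz, UAB _ z (hTcl x y hx hy) hz, UAB x z hx hz]
    · rw [UAA x y hx hy, UAC y z hy hz, UAC _ z (hTcl x y hx hy) hz, UAC x z hx hz]
    · rw [UAB x y hx hy, UBA y z hy hz, UAB x y hx hy]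
    · rw [UAB x y hx hy, UBB y z hy hz, Utopr x]
    · rw [UAB x y hx hy, UBC y z hy hz, Utopr x]
    · rw [UAC x y hx hy, UCA y z hy hz, UAC x y hx hy]
    · rw [UAC x y hx hy, UCB y z hy hz, Utopr x]
    · rw [UAC x y hx hy, UCC y z hy hz, hRA x _ hx (hcond y z hy hz)]
    · rw [UBA x y hx hy, UAA y z hy hz, UBA x z hx hz, UBA x _ hx (hTcl y z hy hz)]
    · rw [UBA x y hx hy, UAB y z hy hz, UBB x z hx hz]
    · rw [UBA x y hx hy, UAC y z hy hz, UBC x z hx hz]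
    · rw [UBB x y hx hy, UBA y z hy hz, Utopl z, UBB x y hx hy]
    · rw [UBB x y hx hy, UBB y z hy hz, Utopl z, Utopr x]
    · rw [UBB x y hx hy, UBC y z hy hz, Utopl z, Utopr x]
    · rw [UBC x y hx hy, UCA y z hy hz, Utopl z, UBC x y hx hy]
    · rw [UBC x y hx hy, UCB y z hy hz, Utopl z, Utopr x]
    · rw [UBC x y hx hy, UCC y z hy hz, Utopl z, hRB x _ hx (hcond y z hy hz)]
    · rw [UCA x y hx hy, UAA y z hy hz, UCA x z hx hz, UCA x _ hx (hTcl y z hy hz)]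
    · rw [UCA x y hx hy, UAB y z hy hz, UCB x z hx hz]
    · rw [UCA x y hx hy, UAC y z hy hz, UCC x z hx hz]
    · rw [UCB x y hx hy, UBA y z hy hz, Utopl z, UCB x y hx hy]
    · rw [UCB x y hx hy, UBB y z hy hz, Utopl z, Utopr x]
    · rw [UCB x y hx hy, UBC y z hy hz, Utopl z, Utopr x]
    · rw [UCC x y hx hy, UCA y z hy hz, hRA' _ z (hcond x y hx hy) hz, UCC x y hx hy]
    · rw [UCC x y hx hy, UCB y z hy hz, hRB' _ z (hcond x y hx hy) hz, Utopr x]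
    · rw [UCC x y hx hy, UCC y z hy hz, hRC' _ z (hcond x y hx hy) hz,
        hRC x _ hx (hcond y z hy hz), sup_assoc]
  · -- monotonicity
    intro x y z hxy
    refine ⟨hmono1 x y z hxy, ?_⟩
    rw [hcomm z x, hcomm z y]
    exact hmono1 x y z hxy
  · -- neutral element
    intro x
    rcases tri x with hx | hx | hx
    · constructor
      · rw [UAA e x le_rfl hx]; exact (hTe x hx).1
      · rw [UAA x e hx le_rfl]; exact (hTe x hx).2
    · exact ⟨UAB e x le_rfl hx, UBA x e hx le_rfl⟩
    · exact ⟨UAC e x le_rfl hx, UCA x e hx le_rfl⟩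
end

section
/- Let $(L,\leq,0,1)$ be a bounded lattice, $e\in L\setminus\{0,1\}$, $I_e=\{x: x\parallel e\}$, and let $T_e$ be a t-norm on $[0,e]$. Define $U_t$ by: $T_e(x,y)$ on $[0,e]^2$; $x\vee y$ on $([0,e]\times(e,1])\cup((e,1]\times[0,e])\cup(I_e\times I_e)$; $y$ on $[0,e]\times I_e$; $x$ on $I_e\times[0,e]$; $1$ otherwise. Then $U_t$ is a uninorm on $L$ with neutral element $e$ if and only if $\{y\vee z: y,z\in I_e\}\subseteq I_e\cup\{1\}$. -/
open Classical in
theorem stmt6 {L : Type*} [Lattice L] [BoundedOrder L] (e : L)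
    (he0 : e ≠ ⊥) (he1 : e ≠ ⊤)
    (T : L → L → L)
    (hTcl : ∀ x y, x ≤ e → y ≤ e → T x y ≤ e)
    (hTcomm : ∀ x y, x ≤ e → y ≤ e → T x y = T y x)
    (hTassoc : ∀ x y z, x ≤ e → y ≤ e → z ≤ e → T (T x y) z = T x (T y z))
    (hTmono : ∀ x y z, x ≤ e → y ≤ e → z ≤ e → x ≤ y → T x z ≤ T y z)
    (hTe : ∀ x, x ≤ e → T e x = x ∧ T x e = x)
    (U : L → L → L)
    (hU : ∀ x y, U x y =
      if x ≤ e ∧ y ≤ e then T x y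
      else if (x ≤ e ∧ e < y) ∨ (e < x ∧ y ≤ e) ∨
          ((¬ x ≤ e ∧ ¬ e ≤ x) ∧ (¬ y ≤ e ∧ ¬ e ≤ y)) then x ⊔ y
      else if x ≤ e ∧ (¬ y ≤ e ∧ ¬ e ≤ y) then y
      else if (¬ x ≤ e ∧ ¬ e ≤ x) ∧ y ≤ e then x
      else (⊤ : L)) :
    ((∀ x y, U x y = U y x) ∧
      (∀ x y z, U (U x y) z = U x (U y z)) ∧
      (∀ x y z, x ≤ y → U x z ≤ U y z ∧ U z x ≤ U z y) ∧
      (∀ x, U e x = x ∧ U x e = x)) ↔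
    (∀ y z, (¬ y ≤ e ∧ ¬ e ≤ y) → (¬ z ≤ e ∧ ¬ e ≤ z) →
      (¬ y ⊔ z ≤ e ∧ ¬ e ≤ y ⊔ z) ∨ y ⊔ z = ⊤) := by
  have hts : ¬ (⊤ : L) ≤ e := fun h => he1 (top_le_iff.mp h)
  have eAA : ∀ x y, x ≤ e → y ≤ e → U x y = T x y := by
    intro x y hx hy; rw [hU, if_pos ⟨hx, hy⟩]
  have eAB : ∀ x y, x ≤ e → e ≤ y → ¬ y ≤ e → U x y = y := by
    intro x y hx hy1 hy2
    rw [hU, if_neg (fun h => hy2 h.2), if_pos (Or.inl ⟨hx, lt_of_le_not_ge hy1 hy2⟩)]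
    exact sup_eq_right.2 (hx.trans hy1)
  have eBA : ∀ x y, e ≤ x → ¬ x ≤ e → y ≤ e → U x y = x := by
    intro x y hx1 hx2 hy
    rw [hU, if_neg (fun h => hx2 h.1),
      if_pos (Or.inr (Or.inl ⟨lt_of_le_not_ge hx1 hx2, hy⟩))]
    exact sup_eq_left.2 (hy.trans hx1)
  have eAI : ∀ x y, x ≤ e → ¬ y ≤ e → ¬ e ≤ y → U x y = y := by
    intro x y hx hy1 hy2
    rw [hU, if_neg (fun h => hy1 h.2), if_neg, if_pos ⟨hx, hy1, hy2⟩]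
    rintro (⟨-, h⟩ | ⟨h, -⟩ | ⟨⟨h, -⟩, -⟩)
    · exact hy2 h.le
    · exact h.not_ge hx
    · exact h hx
  have eIA : ∀ x y, ¬ x ≤ e → ¬ e ≤ x → y ≤ e → U x y = x := by
    intro x y hx1 hx2 hy
    rw [hU, if_neg (fun h => hx1 h.1), if_neg, if_neg (fun h => hx1 h.1),
      if_pos ⟨⟨hx1, hx2⟩, hy⟩]
    rintro (⟨h, -⟩ | ⟨h, -⟩ | ⟨-, ⟨h, -⟩⟩)
    · exact hx1 h
    · exact hx2 h.le
    · exact h hy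
  have eII : ∀ x y, ¬ x ≤ e → ¬ e ≤ x → ¬ y ≤ e → ¬ e ≤ y → U x y = x ⊔ y := by
    intro x y hx1 hx2 hy1 hy2
    rw [hU, if_neg (fun h => hx1 h.1),
      if_pos (Or.inr (Or.inr ⟨⟨hx1, hx2⟩, ⟨hy1, hy2⟩⟩))]
  have eB2 : ∀ x y, e ≤ x → ¬ x ≤ e → ¬ y ≤ e → U x y = ⊤ := by
    intro x y hx1 hx2 hy
    rw [hU, if_neg (fun h => hx2 h.1), if_neg, if_neg (fun h => hx2 h.1),
      if_neg (fun h => h.1.2 hx1)]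
    rintro (⟨h, -⟩ | ⟨-, h⟩ | ⟨⟨-, h⟩, -⟩)
    · exact hx2 h
    · exact hy h
    · exact h hx1
  have e2B : ∀ x y, ¬ x ≤ e → e ≤ y → ¬ y ≤ e → U x y = ⊤ := by
    intro x y hx hy1 hy2
    rw [hU, if_neg (fun h => hx h.1), if_neg, if_neg (fun h => hx h.1),
      if_neg (fun h => hy2 h.2)]
    rintro (⟨h, -⟩ | ⟨-, h⟩ | ⟨-, ⟨-, h⟩⟩)
    · exact hx h
    · exact hy2 h
    · exact h hy1
  have tri : ∀ x : L, x ≤ e ∨ (e ≤ x ∧ ¬ x ≤ e) ∨ (¬ x ≤ e ∧ ¬ e ≤ x) := by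
    intro x
    by_cases h1 : x ≤ e
    · exact Or.inl h1
    · by_cases h2 : e ≤ x
      · exact Or.inr (Or.inl ⟨h2, h1⟩)
      · exact Or.inr (Or.inr ⟨h1, h2⟩)
  have hcomm : ∀ x y, U x y = U y x := by
    intro x y
    rcases tri x with hx | ⟨hx1, hx2⟩ | ⟨hx1, hx2⟩ <;>
      rcases tri y with hy | ⟨hy1, hy2⟩ | ⟨hy1, hy2⟩
    · rw [eAA x y hx hy, eAA y x hy hx]; exact hTcomm x y hx hy
    · rw [eAB x y hx hy1 hy2, eBA y x hy1 hy2 hx]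
    · rw [eAI x y hx hy1 hy2, eIA y x hy1 hy2 hx]
    · rw [eBA x y hx1 hx2 hy, eAB y x hy hx1 hx2]
    · rw [eB2 x y hx1 hx2 hy2, eB2 y x hy1 hy2 hx2]
    · rw [eB2 x y hx1 hx2 hy1, e2B y x hy1 hx1 hx2]
    · rw [eIA x y hx1 hx2 hy, eAI y x hy hx1 hx2]
    · rw [e2B x y hx1 hy1 hy2, eB2 y x hy1 hy2 hx1]
    · rw [eII x y hx1 hx2 hy1 hy2, eII y x hy1 hy2 hx1 hx2, sup_comm]
  have hneut : ∀ x, U e x = x ∧ U x e = x := by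
    intro x
    rcases tri x with hx | ⟨hx1, hx2⟩ | ⟨hx1, hx2⟩
    · constructor
      · rw [eAA e x le_rfl hx]; exact (hTe x hx).1
      · rw [eAA x e hx le_rfl]; exact (hTe x hx).2
    · constructor
      · rw [eAB e x le_rfl hx1 hx2]
      · rw [eBA x e hx1 hx2 le_rfl]
    · constructor
      · rw [eAI e x le_rfl hx1 hx2]
      · rw [eIA x e hx1 hx2 le_rfl]
  have hmono1 : ∀ x y z, x ≤ y → U x z ≤ U y z := by
    intro x y z hxy
    rcases tri x with hx | ⟨hx1, hx2⟩ | ⟨hx1, hx2⟩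
    · rcases tri y with hy | ⟨hy1, hy2⟩ | ⟨hy1, hy2⟩
      · rcases tri z with hz | ⟨hz1, hz2⟩ | ⟨hz1, hz2⟩
        · rw [eAA x z hx hz, eAA y z hy hz]; exact hTmono x y z hx hy hz hxy
        · rw [eAB x z hx hz1 hz2, eAB y z hy hz1 hz2]
        · rw [eAI x z hx hz1 hz2, eAI y z hy hz1 hz2]
      · rcases tri z with hz | ⟨hz1, hz2⟩ | ⟨hz1, hz2⟩
        · rw [eAA x z hx hz, eBA y z hy1 hy2 hz]
          exact (hTcl x z hx hz).trans hy1
        · rw [eAB x z hx hz1 hz2, eB2 y z hy1 hy2 hz2]; exact le_top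
        · rw [eAI x z hx hz1 hz2, eB2 y z hy1 hy2 hz1]; exact le_top
      · rcases tri z with hz | ⟨hz1, hz2⟩ | ⟨hz1, hz2⟩
        · rw [eAA x z hx hz, eIA y z hy1 hy2 hz, hTcomm x z hx hz]
          calc T z x ≤ T e x := hTmono z e x hz le_rfl hx hz
            _ = x := (hTe x hx).1
            _ ≤ y := hxy
        · rw [eAB x z hx hz1 hz2, e2B y z hy1 hz1 hz2]; exact le_top
        · rw [eAI x z hx hz1 hz2, eII y z hy1 hy2 hz1 hz2]; exact le_sup_right
    · rcases tri y with hy | ⟨hy1, hy2⟩ | ⟨hy1, hy2⟩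
      · exact absurd (hxy.trans hy) hx2
      · rcases tri z with hz | ⟨hz1, hz2⟩ | ⟨hz1, hz2⟩
        · rw [eBA x z hx1 hx2 hz, eBA y z hy1 hy2 hz]; exact hxy
        · rw [eB2 x z hx1 hx2 hz2, eB2 y z hy1 hy2 hz2]
        · rw [eB2 x z hx1 hx2 hz1, eB2 y z hy1 hy2 hz1]
      · exact absurd (hx1.trans hxy) hy2
    · rcases tri y with hy | ⟨hy1, hy2⟩ | ⟨hy1, hy2⟩
      · exact absurd (hxy.trans hy) hx1
      · rcases tri z with hz | ⟨hz1, hz2⟩ | ⟨hz1, hz2⟩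
        · rw [eIA x z hx1 hx2 hz, eBA y z hy1 hy2 hz]; exact hxy
        · rw [e2B x z hx1 hz1 hz2, eB2 y z hy1 hy2 hz2]
        · rw [eII x z hx1 hx2 hz1 hz2, eB2 y z hy1 hy2 hz1]; exact le_top
      · rcases tri z with hz | ⟨hz1, hz2⟩ | ⟨hz1, hz2⟩
        · rw [eIA x z hx1 hx2 hz, eIA y z hy1 hy2 hz]; exact hxy
        · rw [e2B x z hx1 hz1 hz2, e2B y z hy1 hz1 hz2]
        · rw [eII x z hx1 hx2 hz1 hz2, eII y z hy1 hy2 hz1 hz2]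
          exact sup_le_sup_right hxy z
  constructor
  · rintro ⟨-, hassoc, -, -⟩ y z ⟨hy1, hy2⟩ ⟨hz1, hz2⟩
    have h1 : ¬ y ⊔ z ≤ e := fun h => hy1 (le_sup_left.trans h)
    by_cases h2 : e ≤ y ⊔ z
    · right
      have := hassoc y z z
      rw [eII y z hy1 hy2 hz1 hz2, eII z z hz1 hz2 hz1 hz2, sup_idem,
        eII y z hy1 hy2 hz1 hz2, eB2 _ z h2 h1 hz1] at this
      exact this.symm
    · exact Or.inl ⟨h1, h2⟩
  · intro hC
    have hassoc : ∀ x y z, U (U x y) z = U x (U y z) := by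
      intro x y z
      rcases tri x with hx | ⟨hx1, hx2⟩ | ⟨hx1, hx2⟩
      · rcases tri y with hy | ⟨hy1, hy2⟩ | ⟨hy1, hy2⟩
        · rcases tri z with hz | ⟨hz1, hz2⟩ | ⟨hz1, hz2⟩
          · rw [eAA x y hx hy, eAA _ z (hTcl x y hx hy) hz, eAA y z hy hz,
              eAA x _ hx (hTcl y z hy hz)]
            exact hTassoc x y z hx hy hz
          · rw [eAA x y hx hy, eAB _ z (hTcl x y hx hy) hz1 hz2,
              eAB y z hy hz1 hz2, eAB x z hx hz1 hz2]
          · rw [eAA x y hx hy, eAI _ z (hTcl x y hx hy) hz1 hz2,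
              eAI y z hy hz1 hz2, eAI x z hx hz1 hz2]
        · rcases tri z with hz | ⟨hz1, hz2⟩ | ⟨hz1, hz2⟩
          · rw [eAB x y hx hy1 hy2, eBA y z hy1 hy2 hz, eAB x y hx hy1 hy2]
          · rw [eAB x y hx hy1 hy2, eB2 y z hy1 hy2 hz2, eAB x ⊤ hx le_top hts]
          · rw [eAB x y hx hy1 hy2, eB2 y z hy1 hy2 hz1, eAB x ⊤ hx le_top hts]
        · rcases tri z with hz | ⟨hz1, hz2⟩ | ⟨hz1, hz2⟩
          · rw [eAI x y hx hy1 hy2, eIA y z hy1 hy2 hz, eAI x y hx hy1 hy2]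
          · rw [eAI x y hx hy1 hy2, e2B y z hy1 hz1 hz2, eAB x ⊤ hx le_top hts]
          · rw [eAI x y hx hy1 hy2, eII y z hy1 hy2 hz1 hz2]
            rcases tri (y ⊔ z) with h | ⟨h1, h2⟩ | ⟨h1, h2⟩
            · exact absurd (le_sup_left.trans h) hy1
            · rw [eAB x _ hx h1 h2]
            · rw [eAI x _ hx h1 h2]
      · rcases tri y with hy | ⟨hy1, hy2⟩ | ⟨hy1, hy2⟩
        · rcases tri z with hz | ⟨hz1, hz2⟩ | ⟨hz1, hz2⟩
          · rw [eBA x y hx1 hx2 hy, eBA x z hx1 hx2 hz, eAA y z hy hz,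
              eBA x _ hx1 hx2 (hTcl y z hy hz)]
          · rw [eBA x y hx1 hx2 hy, eAB y z hy hz1 hz2]
          · rw [eBA x y hx1 hx2 hy, eAI y z hy hz1 hz2]
        · rcases tri z with hz | ⟨hz1, hz2⟩ | ⟨hz1, hz2⟩
          · rw [eB2 x y hx1 hx2 hy2, eBA ⊤ z le_top hts hz, eBA y z hy1 hy2 hz,
              eB2 x y hx1 hx2 hy2]
          · rw [eB2 x y hx1 hx2 hy2, eB2 ⊤ z le_top hts hz2,
              eB2 y z hy1 hy2 hz2, eB2 x ⊤ hx1 hx2 hts]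
          · rw [eB2 x y hx1 hx2 hy2, eB2 ⊤ z le_top hts hz1,
              eB2 y z hy1 hy2 hz1, eB2 x ⊤ hx1 hx2 hts]
        · rcases tri z with hz | ⟨hz1, hz2⟩ | ⟨hz1, hz2⟩
          · rw [eB2 x y hx1 hx2 hy1, eBA ⊤ z le_top hts hz, eIA y z hy1 hy2 hz,
              eB2 x y hx1 hx2 hy1]
          · rw [eB2 x y hx1 hx2 hy1, eB2 ⊤ z le_top hts hz2,
              e2B y z hy1 hz1 hz2, eB2 x ⊤ hx1 hx2 hts]
          · rw [eB2 x y hx1 hx2 hy1, eB2 ⊤ z le_top hts hz1,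
              eII y z hy1 hy2 hz1 hz2,
              eB2 x _ hx1 hx2 (fun h => hy1 (le_sup_left.trans h))]
      · rcases tri y with hy | ⟨hy1, hy2⟩ | ⟨hy1, hy2⟩
        · rcases tri z with hz | ⟨hz1, hz2⟩ | ⟨hz1, hz2⟩
          · rw [eIA x y hx1 hx2 hy, eIA x z hx1 hx2 hz, eAA y z hy hz,
              eIA x _ hx1 hx2 (hTcl y z hy hz)]
          · rw [eIA x y hx1 hx2 hy, eAB y z hy hz1 hz2]
          · rw [eIA x y hx1 hx2 hy, eAI y z hy hz1 hz2]
        · rcases tri z with hz | ⟨hz1, hz2⟩ | ⟨hz1, hz2⟩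
          · rw [e2B x y hx1 hy1 hy2, eBA ⊤ z le_top hts hz, eBA y z hy1 hy2 hz,
              e2B x y hx1 hy1 hy2]
          · rw [e2B x y hx1 hy1 hy2, eB2 ⊤ z le_top hts hz2,
              eB2 y z hy1 hy2 hz2, e2B x ⊤ hx1 le_top hts]
          · rw [e2B x y hx1 hy1 hy2, eB2 ⊤ z le_top hts hz1,
              eB2 y z hy1 hy2 hz1, e2B x ⊤ hx1 le_top hts]
        · rcases tri z with hz | ⟨hz1, hz2⟩ | ⟨hz1, hz2⟩
          · rw [eII x y hx1 hx2 hy1 hy2, eIA y z hy1 hy2 hz,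
              eII x y hx1 hx2 hy1 hy2]
            rcases tri (x ⊔ y) with h | ⟨h1, h2⟩ | ⟨h1, h2⟩
            · exact absurd (le_sup_left.trans h) hx1
            · rw [eBA _ z h1 h2 hz]
            · rw [eIA _ z h1 h2 hz]
          · rw [eII x y hx1 hx2 hy1 hy2, e2B y z hy1 hz1 hz2,
              e2B x ⊤ hx1 le_top hts]
            rcases tri (x ⊔ y) with h | ⟨h1, h2⟩ | ⟨h1, h2⟩
            · exact absurd (le_sup_left.trans h) hx1
            · rw [eB2 _ z h1 h2 hz2]
            · rw [e2B _ z h1 hz1 hz2]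
          · rw [eII x y hx1 hx2 hy1 hy2, eII y z hy1 hy2 hz1 hz2]
            rcases hC x y ⟨hx1, hx2⟩ ⟨hy1, hy2⟩ with ⟨ha1, ha2⟩ | ha <;>
              rcases hC y z ⟨hy1, hy2⟩ ⟨hz1, hz2⟩ with ⟨hb1, hb2⟩ | hb
            · rw [eII _ z ha1 ha2 hz1 hz2, eII x _ hx1 hx2 hb1 hb2, sup_assoc]
            · rw [hb, e2B x ⊤ hx1 le_top hts, eII _ z ha1 ha2 hz1 hz2,
                sup_assoc, hb, sup_top_eq]
            · rw [ha, eB2 ⊤ z le_top hts hz1, eII x _ hx1 hx2 hb1 hb2,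
                ← sup_assoc, ha, top_sup_eq]
            · rw [ha, hb, eB2 ⊤ z le_top hts hz1, e2B x ⊤ hx1 le_top hts]
    exact ⟨hcomm, hassoc,
      fun x y z h => ⟨hmono1 x y z h, by
        rw [hcomm z x, hcomm z y]; exact hmono1 x y z h⟩, hneut⟩
end

section
/- Let $(L,\leq,0,1)$ be a bounded lattice, $e\in L\setminus\{0,1\}$, $I_e=\{x: x\parallel e\}$, and let $S_e$ be a t-conorm on $[e,1]$. Define $U_s(x,y)=S_e(x,y)$ on $[e,1]^2$; $x\wedge y$ on $([0,e)\times[e,1])\cup([e,1]\times[0,e))\cup(I_e\times I_e)$; $y$ on $[e,1]\times I_e$; $x$ on $I_e\times[e,1]$; $0$ otherwise. Then $U_s$ is a uninorm on $L$ with neutral element $e$ if and only if $\{y\wedge z: y,z\in I_e\}\subseteq I_e\cup\{0\}$. -/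
open Classical in
theorem stmt8 {L : Type*} [Lattice L] [BoundedOrder L] (e : L)
    (he0 : e ≠ ⊥) (he1 : e ≠ ⊤)
    (S : L → L → L)
    (hScl : ∀ x y, e ≤ x → e ≤ y → e ≤ S x y)
    (hScomm : ∀ x y, e ≤ x → e ≤ y → S x y = S y x)
    (hSassoc : ∀ x y z, e ≤ x → e ≤ y → e ≤ z → S (S x y) z = S x (S y z))
    (hSmono : ∀ x y z, e ≤ x → e ≤ y → e ≤ z → x ≤ y → S x z ≤ S y z)
    (hSe : ∀ x, e ≤ x → S e x = x ∧ S x e = x)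
    (U : L → L → L)
    (hU : ∀ x y, U x y =
      if e ≤ x ∧ e ≤ y then S x y
      else if (x < e ∧ e ≤ y) ∨ (e ≤ x ∧ y < e) ∨
          ((¬ x ≤ e ∧ ¬ e ≤ x) ∧ (¬ y ≤ e ∧ ¬ e ≤ y)) then x ⊓ y
      else if e ≤ x ∧ (¬ y ≤ e ∧ ¬ e ≤ y) then y
      else if (¬ x ≤ e ∧ ¬ e ≤ x) ∧ e ≤ y then x
      else (⊥ : L)) :
    ((∀ x y, U x y = U y x) ∧
      (∀ x y z, U (U x y) z = U x (U y z)) ∧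
      (∀ x y z, x ≤ y → U x z ≤ U y z ∧ U z x ≤ U z y) ∧
      (∀ x, U e x = x ∧ U x e = x)) ↔
    (∀ y z, (¬ y ≤ e ∧ ¬ e ≤ y) → (¬ z ≤ e ∧ ¬ e ≤ z) →
      (¬ y ⊓ z ≤ e ∧ ¬ e ≤ y ⊓ z) ∨ y ⊓ z = ⊥) := by
  have hbe : (⊥ : L) < e := Ne.bot_lt he0
  have hUaa : ∀ x y, e ≤ x → e ≤ y → U x y = S x y := fun x y hx hy => by
    rw [hU, if_pos ⟨hx, hy⟩]
  have hUab : ∀ x y, e ≤ x → y < e → U x y = y := fun x y hx hy => by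
    rw [hU, if_neg fun h => (h.2.trans_lt hy).false,
        if_pos (Or.inr (Or.inl ⟨hx, hy⟩))]
    exact inf_eq_right.2 (hy.le.trans hx)
  have hUba : ∀ x y, x < e → e ≤ y → U x y = x := fun x y hx hy => by
    rw [hU, if_neg fun h => (h.1.trans_lt hx).false,
        if_pos (Or.inl ⟨hx, hy⟩)]
    exact inf_eq_left.2 (hx.le.trans hy)
  have hUai : ∀ x y, e ≤ x → (¬ y ≤ e ∧ ¬ e ≤ y) → U x y = y := fun x y hx hy => by
    rw [hU, if_neg fun h => hy.2 h.2, if_neg, if_pos ⟨hx, hy⟩]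
    rintro (⟨h1, h2⟩ | ⟨h1, h2⟩ | ⟨h1, h2⟩)
    · exact hy.2 h2
    · exact hy.1 h2.le
    · exact h1.2 hx
  have hUia : ∀ x y, (¬ x ≤ e ∧ ¬ e ≤ x) → e ≤ y → U x y = x := fun x y hx hy => by
    rw [hU, if_neg fun h => hx.2 h.1, if_neg, if_neg fun h => hx.2 h.1,
        if_pos ⟨hx, hy⟩]
    rintro (⟨h1, h2⟩ | ⟨h1, h2⟩ | ⟨h1, h2⟩)
    · exact hx.1 h1.le
    · exact hx.2 h1
    · exact h2.2 hy
  have hUbb : ∀ x y, x < e → y < e → U x y = ⊥ := fun x y hx hy => by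
    rw [hU, if_neg fun h => (h.2.trans_lt hy).false, if_neg, if_neg fun h => (h.1.trans_lt hx).false,
        if_neg fun h => h.1.1 hx.le]
    rintro (⟨h1, h2⟩ | ⟨h1, h2⟩ | ⟨h1, h2⟩)
    · exact (h2.trans_lt hy).false
    · exact (h1.trans_lt hx).false
    · exact h1.1 hx.le
  have hUbi : ∀ x y, x < e → (¬ y ≤ e ∧ ¬ e ≤ y) → U x y = ⊥ := fun x y hx hy => by
    rw [hU, if_neg fun h => (h.1.trans_lt hx).false, if_neg,
        if_neg fun h => (h.1.trans_lt hx).false, if_neg fun h => h.1.1 hx.le]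
    rintro (⟨h1, h2⟩ | ⟨h1, h2⟩ | ⟨h1, h2⟩)
    · exact hy.2 h2
    · exact (h1.trans_lt hx).false
    · exact h1.1 hx.le
  have hUib : ∀ x y, (¬ x ≤ e ∧ ¬ e ≤ x) → y < e → U x y = ⊥ := fun x y hx hy => by
    rw [hU, if_neg fun h => hx.2 h.1, if_neg, if_neg fun h => hx.2 h.1,
        if_neg fun h => (h.2.trans_lt hy).false]
    rintro (⟨h1, h2⟩ | ⟨h1, h2⟩ | ⟨h1, h2⟩)
    · exact hx.1 h1.le
    · exact hx.2 h1
    · exact h2.1 hy.le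
  have hUii : ∀ x y, (¬ x ≤ e ∧ ¬ e ≤ x) → (¬ y ≤ e ∧ ¬ e ≤ y) → U x y = x ⊓ y :=
    fun x y hx hy => by
    rw [hU, if_neg fun h => hx.2 h.1, if_pos (Or.inr (Or.inr ⟨hx, hy⟩))]
  have tri : ∀ x : L, e ≤ x ∨ x < e ∨ (¬ x ≤ e ∧ ¬ e ≤ x) := fun x => by
    by_cases h1 : e ≤ x
    · exact Or.inl h1
    by_cases h2 : x ≤ e
    · exact Or.inr (Or.inl (lt_of_le_not_ge h2 h1))
    · exact Or.inr (Or.inr ⟨h2, h1⟩)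
  have hU0l : ∀ z, U ⊥ z = ⊥ := fun z => by
    rcases tri z with hz | hz | hz
    · exact hUba ⊥ z hbe hz
    · exact hUbb ⊥ z hbe hz
    · exact hUbi ⊥ z hbe hz
  have hU0r : ∀ z, U z ⊥ = ⊥ := fun z => by
    rcases tri z with hz | hz | hz
    · exact hUab z ⊥ hz hbe
    · exact hUbb z ⊥ hz hbe
    · exact hUib z ⊥ hz hbe
  constructor
  · rintro ⟨-, ha, -, -⟩ y z hy hz
    by_cases h1 : e ≤ y ⊓ z
    · exact absurd (h1.trans inf_le_left) hy.2
    by_cases h2 : y ⊓ z ≤ e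
    · right
      have hlt : y ⊓ z < e := lt_of_le_not_ge h2 h1
      have h3 := ha y z z
      rw [hUii z z hz hz, inf_idem] at h3
      rw [hUii y z hy hz] at h3
      rw [hUbi _ z hlt hz] at h3
      exact h3.symm
    · exact Or.inl ⟨h2, h1⟩
  · intro H
    have hcomm : ∀ x y, U x y = U y x := by
      intro x y
      rcases tri x with hx | hx | hx <;> rcases tri y with hy | hy | hy
      · rw [hUaa _ _ hx hy, hUaa _ _ hy hx, hScomm _ _ hx hy]
      · rw [hUab _ _ hx hy, hUba _ _ hy hx]
      · rw [hUai _ _ hx hy, hUia _ _ hy hx]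
      · rw [hUba _ _ hx hy, hUab _ _ hy hx]
      · rw [hUbb _ _ hx hy, hUbb _ _ hy hx]
      · rw [hUbi _ _ hx hy, hUib _ _ hy hx]
      · rw [hUia _ _ hx hy, hUai _ _ hy hx]
      · rw [hUib _ _ hx hy, hUbi _ _ hy hx]
      · rw [hUii _ _ hx hy, hUii _ _ hy hx, inf_comm]
    have hmono : ∀ x y z, x ≤ y → U x z ≤ U y z := by
      intro x y z hxy
      rcases tri x with hx | hx | hx <;> rcases tri y with hy | hy | hy
      · rcases tri z with hz | hz | hz
        · rw [hUaa x z hx hz, hUaa y z hy hz]; exact hSmono x y z hx hy hz hxy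
        · rw [hUab x z hx hz, hUab y z hy hz]
        · rw [hUai x z hx hz, hUai y z hy hz]
      · exact absurd (hx.trans hxy) hy.not_ge
      · exact absurd (hx.trans hxy) hy.2
      · rcases tri z with hz | hz | hz
        · rw [hUba x z hx hz, hUaa y z hy hz]; exact hx.le.trans (hScl y z hy hz)
        · rw [hUbb x z hx hz, hUab y z hy hz]; exact bot_le
        · rw [hUbi x z hx hz, hUai y z hy hz]; exact bot_le
      · rcases tri z with hz | hz | hz
        · rw [hUba x z hx hz, hUba y z hy hz]; exact hxy
        · rw [hUbb x z hx hz, hUbb y z hy hz]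
        · rw [hUbi x z hx hz, hUbi y z hy hz]
      · rcases tri z with hz | hz | hz
        · rw [hUba x z hx hz, hUia y z hy hz]; exact hxy
        · rw [hUbb x z hx hz, hUib y z hy hz]
        · rw [hUbi x z hx hz, hUii y z hy hz]; exact bot_le
      · rcases tri z with hz | hz | hz
        · rw [hUia x z hx hz, hUaa y z hy hz]
          have h1 : y ≤ S y z := by
            have h2 : S e y ≤ S z y := hSmono e z y le_rfl hz hy hz
            rw [(hSe y hy).1] at h2
            rw [hScomm y z hy hz]
            exact h2
          exact hxy.trans h1
        · rw [hUib x z hx hz, hUab y z hy hz]; exact bot_le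
        · rw [hUii x z hx hz, hUai y z hy hz]; exact inf_le_right
      · exact absurd (hxy.trans hy.le) hx.1
      · rcases tri z with hz | hz | hz
        · rw [hUia x z hx hz, hUia y z hy hz]; exact hxy
        · rw [hUib x z hx hz, hUib y z hy hz]
        · rw [hUii x z hx hz, hUii y z hy hz]; exact inf_le_inf_right z hxy
    refine ⟨hcomm, ?_, fun x y z h => ⟨hmono x y z h, by
      rw [hcomm z x, hcomm z y]; exact hmono x y z h⟩, ?_⟩
    · intro x y z
      rcases tri x with hx | hx | hx <;> rcases tri y with hy | hy | hy
      · rcases tri z with hz | hz | hz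
        · rw [hUaa x y hx hy, hUaa _ z (hScl x y hx hy) hz, hUaa y z hy hz,
            hUaa x _ hx (hScl y z hy hz), hSassoc x y z hx hy hz]
        · rw [hUaa x y hx hy, hUab _ z (hScl x y hx hy) hz, hUab y z hy hz, hUab x z hx hz]
        · rw [hUaa x y hx hy, hUai _ z (hScl x y hx hy) hz, hUai y z hy hz, hUai x z hx hz]
      · rcases tri z with hz | hz | hz
        · rw [hUab x y hx hy, hUba y z hy hz, hUab x y hx hy]
        · rw [hUab x y hx hy, hUbb y z hy hz, hU0r x]
        · rw [hUab x y hx hy, hUbi y z hy hz, hU0r x]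
      · rcases tri z with hz | hz | hz
        · rw [hUai x y hx hy, hUia y z hy hz, hUai x y hx hy]
        · rw [hUai x y hx hy, hUib y z hy hz, hU0r x]
        · rw [hUai x y hx hy, hUii y z hy hz]
          rcases H y z hy hz with h | h
          · rw [hUai x _ hx h]
          · rw [h, hU0r x]
      · rcases tri z with hz | hz | hz
        · rw [hUba x y hx hy, hUba x z hx hz, hUaa y z hy hz,
            hUba x _ hx (hScl y z hy hz)]
        · rw [hUba x y hx hy, hUab y z hy hz, hUbb x z hx hz]
        · rw [hUba x y hx hy, hUai y z hy hz, hUbi x z hx hz]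
      · rcases tri z with hz | hz | hz
        · rw [hUbb x y hx hy, hU0l z, hUba y z hy hz, hUbb x y hx hy]
        · rw [hUbb x y hx hy, hU0l z, hUbb y z hy hz, hU0r x]
        · rw [hUbb x y hx hy, hU0l z, hUbi y z hy hz, hU0r x]
      · rcases tri z with hz | hz | hz
        · rw [hUbi x y hx hy, hU0l z, hUia y z hy hz, hUbi x y hx hy]
        · rw [hUbi x y hx hy, hU0l z, hUib y z hy hz, hU0r x]
        · rw [hUbi x y hx hy, hU0l z, hUii y z hy hz]
          rcases H y z hy hz with h | h
          · rw [hUbi x _ hx h]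
          · rw [h, hU0r x]
      · rcases tri z with hz | hz | hz
        · rw [hUia x y hx hy, hUia x z hx hz, hUaa y z hy hz,
            hUia x _ hx (hScl y z hy hz)]
        · rw [hUia x y hx hy, hUab y z hy hz, hUib x z hx hz]
        · rw [hUia x y hx hy, hUai y z hy hz, hUii x z hx hz]
      · rcases tri z with hz | hz | hz
        · rw [hUib x y hx hy, hU0l z, hUba y z hy hz, hUib x y hx hy]
        · rw [hUib x y hx hy, hU0l z, hUbb y z hy hz, hU0r x]
        · rw [hUib x y hx hy, hU0l z, hUbi y z hy hz, hU0r x]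
      · rcases tri z with hz | hz | hz
        · rw [hUii x y hx hy, hUia y z hy hz, hUii x y hx hy]
          rcases H x y hx hy with h | h
          · rw [hUia _ z h hz]
          · rw [h, hU0l z]
        · rw [hUii x y hx hy, hUib y z hy hz, hU0r x]
          rcases H x y hx hy with h | h
          · rw [hUib _ z h hz]
          · rw [h, hU0l z]
        · rw [hUii x y hx hy, hUii y z hy hz]
          rcases H x y hx hy with h1 | h1 <;> rcases H y z hy hz with h2 | h2
          · rw [hUii _ z h1 hz, hUii x _ hx h2, inf_assoc]
          · rw [hUii _ z h1 hz, h2, hU0r x, inf_assoc, h2, inf_bot_eq]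
          · rw [h1, hU0l z, hUii x _ hx h2, ← inf_assoc, h1, bot_inf_eq]
          · rw [h1, hU0l z, h2, hU0r x]
    · intro x
      rcases tri x with hx | hx | hx
      · constructor
        · rw [hUaa e x le_rfl hx]; exact (hSe x hx).1
        · rw [hUaa x e hx le_rfl]; exact (hSe x hx).2
      · exact ⟨hUab e x le_rfl hx, hUba x e hx le_rfl⟩
      · exact ⟨hUai e x le_rfl hx, hUia x e hx le_rfl⟩
end

section
/- Let $(L,\leq,0,1)$ be a bounded lattice, $e\in L\setminus\{0,1\}$, $I_e=\{x: x\parallel e\}$, and let $T_e$ be a t-norm on $[0,e]$. Define $U_T(x,y)=T_e(x,y)$ on $[0,e]^2$; $1$ on $(e,1]^2$; $y$ on $[0,e]\times I_e$; $x$ on $I_e\times[0,e]$; $x\vee y$ otherwise. If $U_T$ is associative, then for all $y,z\in I_e$, either $y\vee z\in I_e$ or $y\vee z=1$. -/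
open Classical in
theorem stmt9 {L : Type*} [Lattice L] [BoundedOrder L] (e : L)
    (he0 : e ≠ ⊥) (he1 : e ≠ ⊤)
    (T : L → L → L)
    (hTcl : ∀ x y, x ≤ e → y ≤ e → T x y ≤ e)
    (hTcomm : ∀ x y, x ≤ e → y ≤ e → T x y = T y x)
    (hTassoc : ∀ x y z, x ≤ e → y ≤ e → z ≤ e → T (T x y) z = T x (T y z))
    (hTmono : ∀ x y z, x ≤ e → y ≤ e → z ≤ e → x ≤ y → T x z ≤ T y z)
    (hTe : ∀ x, x ≤ e → T e x = x ∧ T x e = x)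
    (U : L → L → L)
    (hU : ∀ x y, U x y =
      if x ≤ e ∧ y ≤ e then T x y
      else if e < x ∧ e < y then (⊤ : L)
      else if x ≤ e ∧ (¬ y ≤ e ∧ ¬ e ≤ y) then y
      else if (¬ x ≤ e ∧ ¬ e ≤ x) ∧ y ≤ e then x
      else x ⊔ y)
    (hassoc : ∀ x y z, U (U x y) z = U x (U y z)) :
    (∀ y z, (¬ y ≤ e ∧ ¬ e ≤ y) → (¬ z ≤ e ∧ ¬ e ≤ z) →
      (¬ y ⊔ z ≤ e ∧ ¬ e ≤ y ⊔ z) ∨ y ⊔ z = ⊤) := by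
  intro y z hy hz
  set w := y ⊔ z with hw
  have hwne : ¬ w ≤ e := fun h => hy.1 (le_trans le_sup_left h)
  by_cases hew : e ≤ w
  · right
    have hlt : e < w := lt_of_le_of_ne hew (fun h => hy.1 (h ▸ le_sup_left))
    have h1 : U y z = w := by
      rw [hU]
      rw [if_neg (fun h => hy.1 h.1), if_neg (fun h => hy.2 h.1.le),
        if_neg (fun h => hy.1 h.1), if_neg (fun h => hz.1 h.2)]
    have h2 : U w y = w := by
      rw [hU]
      rw [if_neg (fun h => hwne h.1), if_neg (fun h => hy.2 h.2.le),
        if_neg (fun h => hwne h.1), if_neg (fun h => h.1.2 hew)]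
      exact sup_eq_left.mpr le_sup_left
    have h3 : U w z = w := by
      rw [hU]
      rw [if_neg (fun h => hwne h.1), if_neg (fun h => hz.2 h.2.le),
        if_neg (fun h => hwne h.1), if_neg (fun h => h.1.2 hew)]
      exact sup_eq_left.mpr le_sup_right
    have h4 : U w w = ⊤ := by
      rw [hU, if_neg (fun h => hwne h.1), if_pos ⟨hlt, hlt⟩]
    have := hassoc w y z
    rw [h2, h3, h1, h4] at this
    exact this
  · exact Or.inl ⟨hwne, hew⟩
end

section
/- Let $(L,\leq,0,1)$ be a bounded lattice, $e\in L\setminus\{0,1\}$, $I_e=\{x: x\parallel e\}$ with $\{y\vee z: y,z\in I_e\}\subseteq I_e\cup\{1\}$. Let $T_e$ be a t-norm on $[0,e]$ and define $U_T(x,y)=T_e(x,y)$ on $[0,e]^2$; $1$ on $(e,1]^2$; $y$ on $[0,e]\times I_e$; $x$ on $I_e\times[0,e]$; $x\vee y$ otherwise. Then $U_T$ is a uninorm on $L$ with neutral element $e$. -/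
open Classical in
theorem stmt10 {L : Type*} [Lattice L] [BoundedOrder L] (e : L)
    (he0 : e ≠ ⊥) (he1 : e ≠ ⊤)
    (T : L → L → L)
    (hTcl : ∀ x y, x ≤ e → y ≤ e → T x y ≤ e)
    (hTcomm : ∀ x y, x ≤ e → y ≤ e → T x y = T y x)
    (hTassoc : ∀ x y z, x ≤ e → y ≤ e → z ≤ e → T (T x y) z = T x (T y z))
    (hTmono : ∀ x y z, x ≤ e → y ≤ e → z ≤ e → x ≤ y → T x z ≤ T y z)
    (hTe : ∀ x, x ≤ e → T e x = x ∧ T x e = x)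
    (U : L → L → L)
    (hU : ∀ x y, U x y =
      if x ≤ e ∧ y ≤ e then T x y
      else if e < x ∧ e < y then (⊤ : L)
      else if x ≤ e ∧ (¬ y ≤ e ∧ ¬ e ≤ y) then y
      else if (¬ x ≤ e ∧ ¬ e ≤ x) ∧ y ≤ e then x
      else x ⊔ y)
    (hcond : (∀ y z, (¬ y ≤ e ∧ ¬ e ≤ y) → (¬ z ≤ e ∧ ¬ e ≤ z) →
      (¬ y ⊔ z ≤ e ∧ ¬ e ≤ y ⊔ z) ∨ y ⊔ z = ⊤)) :
    ((∀ x y, U x y = U y x) ∧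
      (∀ x y z, U (U x y) z = U x (U y z)) ∧
      (∀ x y z, x ≤ y → U x z ≤ U y z ∧ U z x ≤ U z y) ∧
      (∀ x, U e x = x ∧ U x e = x)) := by
  have hetop : e < ⊤ := lt_top_iff_ne_top.mpr he1
  -- computation lemmas
  have hUAA : ∀ x y, x ≤ e → y ≤ e → U x y = T x y := by
    intro x y hx hy; rw [hU, if_pos ⟨hx, hy⟩]
  have hUBB : ∀ x y, e < x → e < y → U x y = ⊤ := by
    intro x y hx hy
    rw [hU, if_neg (fun h => hx.not_ge h.1), if_pos ⟨hx, hy⟩]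
  have hUAI : ∀ x y, x ≤ e → (¬ y ≤ e ∧ ¬ e ≤ y) → U x y = y := by
    intro x y hx hy
    rw [hU, if_neg (fun h => hy.1 h.2), if_neg (fun h => hy.2 h.2.le),
      if_pos ⟨hx, hy⟩]
  have hUIA : ∀ x y, (¬ x ≤ e ∧ ¬ e ≤ x) → y ≤ e → U x y = x := by
    intro x y hx hy
    rw [hU, if_neg (fun h => hx.1 h.1), if_neg (fun h => hx.2 h.1.le),
      if_neg (fun h => hx.1 h.1), if_pos ⟨hx, hy⟩]
  have hUAB : ∀ x y, x ≤ e → e < y → U x y = y := by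
    intro x y hx hy
    rw [hU, if_neg (fun h => hy.not_ge h.2), if_neg (fun h => h.1.not_ge hx),
      if_neg (fun h => h.2.2 hy.le), if_neg (fun h => h.1.1 hx)]
    exact sup_eq_right.mpr (hx.trans hy.le)
  have hUBA : ∀ x y, e < x → y ≤ e → U x y = x := by
    intro x y hx hy
    rw [hU, if_neg (fun h => hx.not_ge h.1), if_neg (fun h => h.2.not_ge hy),
      if_neg (fun h => hx.not_ge h.1), if_neg (fun h => h.1.2 hx.le)]
    exact sup_eq_left.mpr (hy.trans hx.le)
  have hUBI : ∀ x y, e < x → (¬ y ≤ e ∧ ¬ e ≤ y) → U x y = x ⊔ y := by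
    intro x y hx hy
    rw [hU, if_neg (fun h => hx.not_ge h.1), if_neg (fun h => hy.2 h.2.le),
      if_neg (fun h => hx.not_ge h.1), if_neg (fun h => h.1.2 hx.le)]
  have hUIB : ∀ x y, (¬ x ≤ e ∧ ¬ e ≤ x) → e < y → U x y = x ⊔ y := by
    intro x y hx hy
    rw [hU, if_neg (fun h => hx.1 h.1), if_neg (fun h => hx.2 h.1.le),
      if_neg (fun h => hx.1 h.1), if_neg (fun h => hy.not_ge h.2)]
  have hUII : ∀ x y, (¬ x ≤ e ∧ ¬ e ≤ x) → (¬ y ≤ e ∧ ¬ e ≤ y) →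
      U x y = x ⊔ y := by
    intro x y hx hy
    rw [hU, if_neg (fun h => hx.1 h.1), if_neg (fun h => hx.2 h.1.le),
      if_neg (fun h => hx.1 h.1), if_neg (fun h => hy.1 h.2)]
  have tri : ∀ x : L, x ≤ e ∨ e < x ∨ (¬ x ≤ e ∧ ¬ e ≤ x) := by
    intro x
    by_cases h1 : x ≤ e
    · exact Or.inl h1
    by_cases h2 : e ≤ x
    · exact Or.inr (Or.inl (lt_of_le_not_ge h2 h1))
    · exact Or.inr (Or.inr ⟨h1, h2⟩)
  have hTle : ∀ x z, x ≤ e → z ≤ e → T x z ≤ x := by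
    intro x z hx hz
    calc T x z = T z x := hTcomm x z hx hz
    _ ≤ T e x := hTmono z e x hz le_rfl hx hz
    _ = x := (hTe x hx).1
  -- commutativity
  have comm : ∀ x y, U x y = U y x := by
    intro x y
    rcases tri x with hx | hx | hx <;> rcases tri y with hy | hy | hy
    · rw [hUAA x y hx hy, hUAA y x hy hx, hTcomm x y hx hy]
    · rw [hUAB x y hx hy, hUBA y x hy hx]
    · rw [hUAI x y hx hy, hUIA y x hy hx]
    · rw [hUBA x y hx hy, hUAB y x hy hx]
    · rw [hUBB x y hx hy, hUBB y x hy hx]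
    · rw [hUBI x y hx hy, hUIB y x hy hx, sup_comm]
    · rw [hUIA x y hx hy, hUAI y x hy hx]
    · rw [hUIB x y hx hy, hUBI y x hy hx, sup_comm]
    · rw [hUII x y hx hy, hUII y x hy hx, sup_comm]
  -- neutral element
  have hne : ∀ x, U e x = x := by
    intro x
    rcases tri x with hx | hx | hx
    · rw [hUAA e x le_rfl hx]; exact (hTe x hx).1
    · exact hUAB e x le_rfl hx
    · exact hUAI e x le_rfl hx
  -- monotonicity
  have mono1 : ∀ x y z, x ≤ y → U x z ≤ U y z := by
    intro x y z hxy
    rcases tri x with hx | hx | hx <;> rcases tri y with hy | hy | hy <;>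
      rcases tri z with hz | hz | hz
    · rw [hUAA x z hx hz, hUAA y z hy hz]; exact hTmono x y z hx hy hz hxy
    · rw [hUAB x z hx hz, hUAB y z hy hz]
    · rw [hUAI x z hx hz, hUAI y z hy hz]
    · rw [hUAA x z hx hz, hUBA y z hy hz]
      exact (hTcl x z hx hz).trans hy.le
    · rw [hUAB x z hx hz, hUBB y z hy hz]; exact le_top
    · rw [hUAI x z hx hz, hUBI y z hy hz]; exact le_sup_right
    · rw [hUAA x z hx hz, hUIA y z hy hz]
      exact (hTle x z hx hz).trans hxy
    · rw [hUAB x z hx hz, hUIB y z hy hz]; exact le_sup_right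
    · rw [hUAI x z hx hz, hUII y z hy hz]; exact le_sup_right
    · exact absurd (hx.trans_le (hxy.trans hy)) (lt_irrefl e)
    · exact absurd (hx.trans_le (hxy.trans hy)) (lt_irrefl e)
    · exact absurd (hx.trans_le (hxy.trans hy)) (lt_irrefl e)
    · rw [hUBA x z hx hz, hUBA y z hy hz]; exact hxy
    · rw [hUBB x z hx hz, hUBB y z hy hz]
    · rw [hUBI x z hx hz, hUBI y z hy hz]; exact sup_le_sup_right hxy z
    · exact absurd (hx.le.trans hxy) hy.2
    · exact absurd (hx.le.trans hxy) hy.2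
    · exact absurd (hx.le.trans hxy) hy.2
    · exact absurd (hxy.trans hy) hx.1
    · exact absurd (hxy.trans hy) hx.1
    · exact absurd (hxy.trans hy) hx.1
    · rw [hUIA x z hx hz, hUBA y z hy hz]; exact hxy
    · rw [hUIB x z hx hz, hUBB y z hy hz]; exact le_top
    · rw [hUII x z hx hz, hUBI y z hy hz]; exact sup_le_sup_right hxy z
    · rw [hUIA x z hx hz, hUIA y z hy hz]; exact hxy
    · rw [hUIB x z hx hz, hUIB y z hy hz]; exact sup_le_sup_right hxy z
    · rw [hUII x z hx hz, hUII y z hy hz]; exact sup_le_sup_right hxy z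
  -- associativity
  have assoc : ∀ x y z, U (U x y) z = U x (U y z) := by
    intro x y z
    rcases tri x with hx | hx | hx <;> rcases tri y with hy | hy | hy <;>
      rcases tri z with hz | hz | hz
    · rw [hUAA x y hx hy, hUAA (T x y) z (hTcl x y hx hy) hz,
        hUAA y z hy hz, hUAA x (T y z) hx (hTcl y z hy hz)]
      exact hTassoc x y z hx hy hz
    · rw [hUAA x y hx hy, hUAB (T x y) z (hTcl x y hx hy) hz,
        hUAB y z hy hz, hUAB x z hx hz]
    · rw [hUAA x y hx hy, hUAI (T x y) z (hTcl x y hx hy) hz,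
        hUAI y z hy hz, hUAI x z hx hz]
    · rw [hUAB x y hx hy, hUBA y z hy hz, hUAB x y hx hy]
    · rw [hUAB x y hx hy, hUBB y z hy hz, hUAB x ⊤ hx hetop]
    · rw [hUAB x y hx hy, hUBI y z hy hz,
        hUAB x (y ⊔ z) hx (hy.trans_le le_sup_left)]
    · rw [hUAI x y hx hy, hUIA y z hy hz, hUAI x y hx hy]
    · rw [hUAI x y hx hy, hUIB y z hy hz,
        hUAB x (y ⊔ z) hx (hz.trans_le le_sup_right)]
    · rw [hUAI x y hx hy, hUII y z hy hz]
      rcases hcond y z hy hz with h | h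
      · rw [hUAI x (y ⊔ z) hx h]
      · rw [h, hUAB x ⊤ hx hetop]
    · rw [hUBA x y hx hy, hUAA y z hy hz, hUBA x z hx hz,
        hUBA x (T y z) hx (hTcl y z hy hz)]
    · rw [hUBA x y hx hy, hUAB y z hy hz]
    · rw [hUBA x y hx hy, hUAI y z hy hz]
    · rw [hUBB x y hx hy, hUBA y z hy hz, hUBA ⊤ z hetop hz, hUBB x y hx hy]
    · rw [hUBB x y hx hy, hUBB y z hy hz, hUBB ⊤ z hetop hz, hUBB x ⊤ hx hetop]
    · rw [hUBB x y hx hy, hUBI y z hy hz, hUBI ⊤ z hetop hz,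
        hUBB x (y ⊔ z) hx (hy.trans_le le_sup_left), top_sup_eq]
    · rw [hUBI x y hx hy, hUIA y z hy hz,
        hUBA (x ⊔ y) z (hx.trans_le le_sup_left) hz, hUBI x y hx hy]
    · rw [hUBI x y hx hy, hUIB y z hy hz,
        hUBB (x ⊔ y) z (hx.trans_le le_sup_left) hz,
        hUBB x (y ⊔ z) hx (hz.trans_le le_sup_right)]
    · rw [hUBI x y hx hy, hUII y z hy hz,
        hUBI (x ⊔ y) z (hx.trans_le le_sup_left) hz]
      rcases hcond y z hy hz with h | h
      · rw [hUBI x (y ⊔ z) hx h, sup_assoc]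
      · rw [sup_assoc, h, hUBB x ⊤ hx hetop, sup_top_eq]
    · rw [hUIA x y hx hy, hUAA y z hy hz, hUIA x z hx hz,
        hUIA x (T y z) hx (hTcl y z hy hz)]
    · rw [hUIA x y hx hy, hUAB y z hy hz]
    · rw [hUIA x y hx hy, hUAI y z hy hz]
    · rw [hUIB x y hx hy, hUBA y z hy hz,
        hUBA (x ⊔ y) z (hy.trans_le le_sup_right) hz, hUIB x y hx hy]
    · rw [hUIB x y hx hy, hUBB y z hy hz,
        hUBB (x ⊔ y) z (hy.trans_le le_sup_right) hz,
        hUIB x ⊤ hx hetop, sup_top_eq]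
    · rw [hUIB x y hx hy, hUBI y z hy hz,
        hUBI (x ⊔ y) z (hy.trans_le le_sup_right) hz,
        hUIB x (y ⊔ z) hx (hy.trans_le le_sup_left), sup_assoc]
    · rw [hUII x y hx hy, hUIA y z hy hz, hUII x y hx hy]
      rcases hcond x y hx hy with h | h
      · rw [hUIA (x ⊔ y) z h hz]
      · rw [h, hUBA ⊤ z hetop hz]
    · rw [hUII x y hx hy, hUIB y z hy hz,
        hUIB x (y ⊔ z) hx (hz.trans_le le_sup_right), ← sup_assoc]
      rcases hcond x y hx hy with h | h
      · rw [hUIB (x ⊔ y) z h hz]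
      · rw [h, hUBB ⊤ z hetop hz, top_sup_eq]
    · rw [hUII x y hx hy, hUII y z hy hz]
      rcases hcond x y hx hy with h1 | h1 <;> rcases hcond y z hy hz with h2 | h2
      · rw [hUII (x ⊔ y) z h1 hz, hUII x (y ⊔ z) hx h2, sup_assoc]
      · rw [hUII (x ⊔ y) z h1 hz, sup_assoc, h2, hUIB x ⊤ hx hetop]
      · rw [h1, hUBI ⊤ z hetop hz, top_sup_eq, hUII x (y ⊔ z) hx h2,
          ← sup_assoc, h1, top_sup_eq]
      · rw [h1, hUBI ⊤ z hetop hz, top_sup_eq, h2, hUIB x ⊤ hx hetop,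
          sup_top_eq]
  refine ⟨comm, assoc, fun x y z h => ⟨mono1 x y z h, ?_⟩,
    fun x => ⟨hne x, by rw [comm x e]; exact hne x⟩⟩
  rw [comm z x, comm z y]; exact mono1 x y z h
end

section
/- Let $(L,\leq,0,1)$ be a bounded lattice, $e\in L\setminus\{0,1\}$, $I_e=\{x: x\parallel e\}$, and let $T_e$ be a t-norm on $[0,e]$. Define $U_T(x,y)=T_e(x,y)$ on $[0,e]^2$; $1$ on $(e,1]^2$; $y$ on $[0,e]\times I_e$; $x$ on $I_e\times[0,e]$; $x\vee y$ otherwise. Then $U_T$ is a uninorm on $L$ with neutral element $e$ if and only if $\{y\vee z: y,z\in I_e\}\subseteq I_e\cup\{1\}$. -/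
open Classical in
theorem stmt11 {L : Type*} [Lattice L] [BoundedOrder L] (e : L)
    (he0 : e ≠ ⊥) (he1 : e ≠ ⊤)
    (T : L → L → L)
    (hTcl : ∀ x y, x ≤ e → y ≤ e → T x y ≤ e)
    (hTcomm : ∀ x y, x ≤ e → y ≤ e → T x y = T y x)
    (hTassoc : ∀ x y z, x ≤ e → y ≤ e → z ≤ e → T (T x y) z = T x (T y z))
    (hTmono : ∀ x y z, x ≤ e → y ≤ e → z ≤ e → x ≤ y → T x z ≤ T y z)
    (hTe : ∀ x, x ≤ e → T e x = x ∧ T x e = x)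
    (U : L → L → L)
    (hU : ∀ x y, U x y =
      if x ≤ e ∧ y ≤ e then T x y
      else if e < x ∧ e < y then (⊤ : L)
      else if x ≤ e ∧ (¬ y ≤ e ∧ ¬ e ≤ y) then y
      else if (¬ x ≤ e ∧ ¬ e ≤ x) ∧ y ≤ e then x
      else x ⊔ y) :
    ((∀ x y, U x y = U y x) ∧
      (∀ x y z, U (U x y) z = U x (U y z)) ∧
      (∀ x y z, x ≤ y → U x z ≤ U y z ∧ U z x ≤ U z y) ∧
      (∀ x, U e x = x ∧ U x e = x)) ↔
    (∀ y z, (¬ y ≤ e ∧ ¬ e ≤ y) → (¬ z ≤ e ∧ ¬ e ≤ z) →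
      (¬ y ⊔ z ≤ e ∧ ¬ e ≤ y ⊔ z) ∨ y ⊔ z = ⊤) := by
  have tri : ∀ x : L, x ≤ e ∨ e < x ∨ (¬ x ≤ e ∧ ¬ e ≤ x) := by
    intro x
    by_cases h1 : x ≤ e
    · exact Or.inl h1
    · by_cases h2 : e ≤ x
      · exact Or.inr (Or.inl (lt_of_le_of_ne h2 (fun h => h1 (h ▸ le_rfl))))
      · exact Or.inr (Or.inr ⟨h1, h2⟩)
  have htop : e < ⊤ := lt_top_iff_ne_top.2 he1
  have vAA : ∀ x y, x ≤ e → y ≤ e → U x y = T x y := by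
    intro x y hx hy
    rw [hU, if_pos ⟨hx, hy⟩]
  have vAB : ∀ x y, x ≤ e → e < y → U x y = y := by
    intro x y hx hy
    have c1 : ¬(x ≤ e ∧ y ≤ e) := fun h => hy.not_ge h.2
    have c2 : ¬(e < x ∧ e < y) := fun h => h.1.not_ge hx
    have c3 : ¬(x ≤ e ∧ (¬ y ≤ e ∧ ¬ e ≤ y)) := fun h => h.2.2 hy.le
    have c4 : ¬((¬ x ≤ e ∧ ¬ e ≤ x) ∧ y ≤ e) := fun h => h.1.1 hx
    rw [hU, if_neg c1, if_neg c2, if_neg c3, if_neg c4]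
    exact sup_eq_right.2 (hx.trans hy.le)
  have vBA : ∀ x y, e < x → y ≤ e → U x y = x := by
    intro x y hx hy
    have c1 : ¬(x ≤ e ∧ y ≤ e) := fun h => hx.not_ge h.1
    have c2 : ¬(e < x ∧ e < y) := fun h => h.2.not_ge hy
    have c3 : ¬(x ≤ e ∧ (¬ y ≤ e ∧ ¬ e ≤ y)) := fun h => hx.not_ge h.1
    have c4 : ¬((¬ x ≤ e ∧ ¬ e ≤ x) ∧ y ≤ e) := fun h => h.1.2 hx.le
    rw [hU, if_neg c1, if_neg c2, if_neg c3, if_neg c4]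
    exact sup_eq_left.2 (hy.trans hx.le)
  have vBB : ∀ x y, e < x → e < y → U x y = ⊤ := by
    intro x y hx hy
    have c1 : ¬(x ≤ e ∧ y ≤ e) := fun h => hx.not_ge h.1
    rw [hU, if_neg c1, if_pos ⟨hx, hy⟩]
  have vAC : ∀ x y, x ≤ e → (¬ y ≤ e ∧ ¬ e ≤ y) → U x y = y := by
    intro x y hx hy
    have c1 : ¬(x ≤ e ∧ y ≤ e) := fun h => hy.1 h.2
    have c2 : ¬(e < x ∧ e < y) := fun h => h.1.not_ge hx
    rw [hU, if_neg c1, if_neg c2, if_pos ⟨hx, hy⟩]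
  have vCA : ∀ x y, (¬ x ≤ e ∧ ¬ e ≤ x) → y ≤ e → U x y = x := by
    intro x y hx hy
    have c1 : ¬(x ≤ e ∧ y ≤ e) := fun h => hx.1 h.1
    have c2 : ¬(e < x ∧ e < y) := fun h => hx.2 h.1.le
    have c3 : ¬(x ≤ e ∧ (¬ y ≤ e ∧ ¬ e ≤ y)) := fun h => hx.1 h.1
    rw [hU, if_neg c1, if_neg c2, if_neg c3, if_pos ⟨hx, hy⟩]
  have vBC : ∀ x y, e < x → (¬ y ≤ e ∧ ¬ e ≤ y) → U x y = x ⊔ y := by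
    intro x y hx hy
    have c1 : ¬(x ≤ e ∧ y ≤ e) := fun h => hx.not_ge h.1
    have c2 : ¬(e < x ∧ e < y) := fun h => hy.2 h.2.le
    have c3 : ¬(x ≤ e ∧ (¬ y ≤ e ∧ ¬ e ≤ y)) := fun h => hx.not_ge h.1
    have c4 : ¬((¬ x ≤ e ∧ ¬ e ≤ x) ∧ y ≤ e) := fun h => h.1.2 hx.le
    rw [hU, if_neg c1, if_neg c2, if_neg c3, if_neg c4]
  have vCB : ∀ x y, (¬ x ≤ e ∧ ¬ e ≤ x) → e < y → U x y = x ⊔ y := by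
    intro x y hx hy
    have c1 : ¬(x ≤ e ∧ y ≤ e) := fun h => hx.1 h.1
    have c2 : ¬(e < x ∧ e < y) := fun h => hx.2 h.1.le
    have c3 : ¬(x ≤ e ∧ (¬ y ≤ e ∧ ¬ e ≤ y)) := fun h => hx.1 h.1
    have c4 : ¬((¬ x ≤ e ∧ ¬ e ≤ x) ∧ y ≤ e) := fun h => hy.not_ge h.2
    rw [hU, if_neg c1, if_neg c2, if_neg c3, if_neg c4]
  have vCC : ∀ x y, (¬ x ≤ e ∧ ¬ e ≤ x) → (¬ y ≤ e ∧ ¬ e ≤ y) → U x y = x ⊔ y := by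
    intro x y hx hy
    have c1 : ¬(x ≤ e ∧ y ≤ e) := fun h => hx.1 h.1
    have c2 : ¬(e < x ∧ e < y) := fun h => hx.2 h.1.le
    have c3 : ¬(x ≤ e ∧ (¬ y ≤ e ∧ ¬ e ≤ y)) := fun h => hx.1 h.1
    have c4 : ¬((¬ x ≤ e ∧ ¬ e ≤ x) ∧ y ≤ e) := fun h => hy.1 h.2
    rw [hU, if_neg c1, if_neg c2, if_neg c3, if_neg c4]
  have vTopR : ∀ x, U x ⊤ = ⊤ := by
    intro x
    rcases tri x with h | h | h
    · rw [vAB x ⊤ h htop]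
    · rw [vBB x ⊤ h htop]
    · rw [vCB x ⊤ h htop]; simp
  have vTopL : ∀ x, U ⊤ x = ⊤ := by
    intro x
    rcases tri x with h | h | h
    · rw [vBA ⊤ x htop h]
    · rw [vBB ⊤ x htop h]
    · rw [vBC ⊤ x htop h]; simp
  have hTle : ∀ x z, x ≤ e → z ≤ e → T x z ≤ x := by
    intro x z hx hz
    calc T x z = T z x := hTcomm x z hx hz
      _ ≤ T e x := hTmono z e x hz le_rfl hx hz
      _ = x := (hTe x hx).1
  have hcomm : ∀ x y, U x y = U y x := by
    intro x y
    rcases tri x with hx | hx | hx <;> rcases tri y with hy | hy | hy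
    · rw [vAA x y hx hy, vAA y x hy hx]; exact hTcomm x y hx hy
    · rw [vAB x y hx hy, vBA y x hy hx]
    · rw [vAC x y hx hy, vCA y x hy hx]
    · rw [vBA x y hx hy, vAB y x hy hx]
    · rw [vBB x y hx hy, vBB y x hy hx]
    · rw [vBC x y hx hy, vCB y x hy hx, sup_comm x y]
    · rw [vCA x y hx hy, vAC y x hy hx]
    · rw [vCB x y hx hy, vBC y x hy hx, sup_comm x y]
    · rw [vCC x y hx hy, vCC y x hy hx, sup_comm x y]
  have hneut : ∀ x, U e x = x ∧ U x e = x := by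
    intro x
    rcases tri x with hx | hx | hx
    · rw [vAA e x le_rfl hx, vAA x e hx le_rfl]
      exact ⟨(hTe x hx).1, (hTe x hx).2⟩
    · rw [vAB e x le_rfl hx, vBA x e hx le_rfl]; exact ⟨rfl, rfl⟩
    · rw [vAC e x le_rfl hx, vCA x e hx le_rfl]; exact ⟨rfl, rfl⟩
  have hmono1 : ∀ x y z, x ≤ y → U x z ≤ U y z := by
    intro x y z hxy
    rcases tri x with hx | hx | hx <;> rcases tri y with hy | hy | hy <;>
      rcases tri z with hz | hz | hz
    · rw [vAA x z hx hz, vAA y z hy hz]; exact hTmono x y z hx hy hz hxy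
    · rw [vAB x z hx hz, vAB y z hy hz]
    · rw [vAC x z hx hz, vAC y z hy hz]
    · rw [vAA x z hx hz, vBA y z hy hz]; exact (hTcl x z hx hz).trans hy.le
    · rw [vAB x z hx hz, vBB y z hy hz]; exact le_top
    · rw [vAC x z hx hz, vBC y z hy hz]; exact le_sup_right
    · rw [vAA x z hx hz, vCA y z hy hz]; exact (hTle x z hx hz).trans hxy
    · rw [vAB x z hx hz, vCB y z hy hz]; exact le_sup_right
    · rw [vAC x z hx hz, vCC y z hy hz]; exact le_sup_right
    · exact absurd (hxy.trans hy) hx.not_ge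
    · exact absurd (hxy.trans hy) hx.not_ge
    · exact absurd (hxy.trans hy) hx.not_ge
    · rw [vBA x z hx hz, vBA y z hy hz]; exact hxy
    · rw [vBB x z hx hz, vBB y z hy hz]
    · rw [vBC x z hx hz, vBC y z hy hz]; exact sup_le_sup_right hxy z
    · exact absurd (hx.le.trans hxy) hy.2
    · exact absurd (hx.le.trans hxy) hy.2
    · exact absurd (hx.le.trans hxy) hy.2
    · exact absurd (hxy.trans hy) hx.1
    · exact absurd (hxy.trans hy) hx.1
    · exact absurd (hxy.trans hy) hx.1
    · rw [vCA x z hx hz, vBA y z hy hz]; exact hxy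
    · rw [vCB x z hx hz, vBB y z hy hz]; exact le_top
    · rw [vCC x z hx hz, vBC y z hy hz]; exact sup_le_sup_right hxy z
    · rw [vCA x z hx hz, vCA y z hy hz]; exact hxy
    · rw [vCB x z hx hz, vCB y z hy hz]; exact sup_le_sup_right hxy z
    · rw [vCC x z hx hz, vCC y z hy hz]; exact sup_le_sup_right hxy z
  constructor
  · rintro ⟨_, hassoc, _, _⟩ y z hy hz
    by_contra hcon
    push_neg at hcon
    have hle : e ≤ y ⊔ z := by
      by_cases hc : y ⊔ z ≤ e
      · exact absurd (le_sup_left.trans hc) hy.1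
      · exact hcon.1 hc
    have hlt : e < y ⊔ z :=
      lt_of_le_of_ne hle (fun h => hy.1 (le_sup_left.trans h.ge))
    have key := hassoc y z (y ⊔ z)
    rw [vCC y z hy hz, vBB (y ⊔ z) (y ⊔ z) hlt hlt, vCB z (y ⊔ z) hz hlt,
      sup_eq_right.2 (le_sup_right : z ≤ y ⊔ z), vCB y (y ⊔ z) hy hlt,
      sup_eq_right.2 (le_sup_left : y ≤ y ⊔ z)] at key
    exact hcon.2 key.symm
  · intro H
    have hassoc : ∀ x y z, U (U x y) z = U x (U y z) := by
      intro x y z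
      rcases tri x with hx | hx | hx <;> rcases tri y with hy | hy | hy <;>
        rcases tri z with hz | hz | hz
      · rw [vAA x y hx hy, vAA y z hy hz, vAA _ z (hTcl x y hx hy) hz,
          vAA x _ hx (hTcl y z hy hz)]
        exact hTassoc x y z hx hy hz
      · rw [vAA x y hx hy, vAB _ z (hTcl x y hx hy) hz, vAB y z hy hz, vAB x z hx hz]
      · rw [vAA x y hx hy, vAC _ z (hTcl x y hx hy) hz, vAC y z hy hz, vAC x z hx hz]
      · rw [vAB x y hx hy, vBA y z hy hz, vAB x y hx hy]
      · rw [vAB x y hx hy, vBB y z hy hz, vTopR x]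
      · rw [vAB x y hx hy, vBC y z hy hz, vAB x _ hx (lt_of_lt_of_le hy le_sup_left)]
      · rw [vAC x y hx hy, vCA y z hy hz, vAC x y hx hy]
      · rw [vAC x y hx hy, vCB y z hy hz, vAB x _ hx (lt_of_lt_of_le hz le_sup_right)]
      · rw [vAC x y hx hy, vCC y z hy hz]
        rcases H y z hy hz with h | h
        · rw [vAC x _ hx h]
        · rw [h, vTopR x]
      · rw [vBA x y hx hy, vBA x z hx hz, vAA y z hy hz, vBA x _ hx (hTcl y z hy hz)]
      · rw [vBA x y hx hy, vAB y z hy hz, vBB x z hx hz]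
      · rw [vBA x y hx hy, vAC y z hy hz, vBC x z hx hz]
      · rw [vBB x y hx hy, vTopL z, vBA y z hy hz, vBB x y hx hy]
      · rw [vBB x y hx hy, vTopL z, vBB y z hy hz, vTopR x]
      · rw [vBB x y hx hy, vTopL z, vBC y z hy hz,
          vBB x _ hx (lt_of_lt_of_le hy le_sup_left)]
      · rw [vBC x y hx hy, vBA _ z (lt_of_lt_of_le hx le_sup_left) hz, vCA y z hy hz,
          vBC x y hx hy]
      · rw [vBC x y hx hy, vBB _ z (lt_of_lt_of_le hx le_sup_left) hz, vCB y z hy hz,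
          vBB x _ hx (lt_of_lt_of_le hz le_sup_right)]
      · rw [vBC x y hx hy, vBC _ z (lt_of_lt_of_le hx le_sup_left) hz, vCC y z hy hz]
        rcases H y z hy hz with h | h
        · rw [vBC x _ hx h, sup_assoc]
        · rw [h, vBB x ⊤ hx htop, sup_assoc, h]; simp
      · rw [vCA x y hx hy, vCA x z hx hz, vAA y z hy hz, vCA x _ hx (hTcl y z hy hz)]
      · rw [vCA x y hx hy, vAB y z hy hz, vCB x z hx hz]
      · rw [vCA x y hx hy, vAC y z hy hz, vCC x z hx hz]
      · rw [vCB x y hx hy, vBA _ z (lt_of_lt_of_le hy le_sup_right) hz, vBA y z hy hz,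
          vCB x y hx hy]
      · rw [vCB x y hx hy, vBB _ z (lt_of_lt_of_le hy le_sup_right) hz, vBB y z hy hz,
          vCB x ⊤ hx htop]
        simp
      · rw [vCB x y hx hy, vBC _ z (lt_of_lt_of_le hy le_sup_right) hz, vBC y z hy hz,
          vCB x _ hx (lt_of_lt_of_le hy le_sup_left), sup_assoc]
      · rw [vCC x y hx hy]
        rcases H x y hx hy with h | h
        · rw [vCA _ z h hz, vCA y z hy hz, vCC x y hx hy]
        · rw [h, vTopL z, vCA y z hy hz, vCC x y hx hy, h]
      · rw [vCC x y hx hy, vCB y z hy hz, vCB x _ hx (lt_of_lt_of_le hz le_sup_right)]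
        rcases H x y hx hy with h | h
        · rw [vCB _ z h hz, sup_assoc]
        · rw [h, vBB ⊤ z htop hz, ← sup_assoc, h]; simp
      · rw [vCC x y hx hy, vCC y z hy hz]
        rcases H x y hx hy with h1 | h1 <;> rcases H y z hy hz with h2 | h2
        · rw [vCC _ z h1 hz, vCC x _ hx h2, sup_assoc]
        · rw [vCC _ z h1 hz, h2, vTopR x, sup_assoc, h2]; simp
        · rw [h1, vTopL z, vCC x _ hx h2, ← sup_assoc, h1]; simp
        · rw [h1, h2, vTopL z, vTopR x]
    exact ⟨hcomm, hassoc,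
      fun x y z h => ⟨hmono1 x y z h, by rw [hcomm z x, hcomm z y]; exact hmono1 x y z h⟩,
      hneut⟩
end

section
/- Let $(L,\leq,0,1)$ be a bounded lattice, $e\in L\setminus\{0,1\}$, $I_e=\{x: x\parallel e\}$, and let $T_e$ be a t-norm on $[0,e]$. Define $U_{T_e}(x,y)=T_e(x,y)$ on $[0,e]^2$; $y$ on $[e,1]\times I_e$; $x$ on $I_e\times[e,1]$; $0$ on $([0,e)\times I_e)\cup(I_e\times[0,e))$; $x\wedge y$ on $([0,e)\times[e,1])\cup([e,1]\times[0,e))\cup(I_e\times I_e)$; $x\vee y$ otherwise. If $U_{T_e}$ is a uninorm on $L$ with neutral element $e$, then $T_e(x,y)=0$ for all $x\in[0,e)$ and all $y\in\mathscr{P}$, where $\mathscr{P}=\{x\in(0,e): \exists z\in I_e,\ x\leq z\}$. -/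
open Classical in
theorem stmt12 {L : Type*} [Lattice L] [BoundedOrder L] (e : L)
    (he0 : e ≠ ⊥) (he1 : e ≠ ⊤)
    (T : L → L → L)
    (hTcl : ∀ x y, x ≤ e → y ≤ e → T x y ≤ e)
    (hTcomm : ∀ x y, x ≤ e → y ≤ e → T x y = T y x)
    (hTassoc : ∀ x y z, x ≤ e → y ≤ e → z ≤ e → T (T x y) z = T x (T y z))
    (hTmono : ∀ x y z, x ≤ e → y ≤ e → z ≤ e → x ≤ y → T x z ≤ T y z)
    (hTe : ∀ x, x ≤ e → T e x = x ∧ T x e = x)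
    (U : L → L → L)
    (hU : ∀ x y, U x y =
      if x ≤ e ∧ y ≤ e then T x y
      else if e ≤ x ∧ (¬ y ≤ e ∧ ¬ e ≤ y) then y
      else if (¬ x ≤ e ∧ ¬ e ≤ x) ∧ e ≤ y then x
      else if (x < e ∧ (¬ y ≤ e ∧ ¬ e ≤ y)) ∨ ((¬ x ≤ e ∧ ¬ e ≤ x) ∧ y < e) then (⊥ : L)
      else if (x < e ∧ e ≤ y) ∨ (e ≤ x ∧ y < e) ∨
          ((¬ x ≤ e ∧ ¬ e ≤ x) ∧ (¬ y ≤ e ∧ ¬ e ≤ y)) then x ⊓ y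
      else x ⊔ y)
    (huni : ((∀ x y, U x y = U y x) ∧
      (∀ x y z, U (U x y) z = U x (U y z)) ∧
      (∀ x y z, x ≤ y → U x z ≤ U y z ∧ U z x ≤ U z y) ∧
      (∀ x, U e x = x ∧ U x e = x))) :
    (∀ x y, x < e → (⊥ < y ∧ y < e ∧ ∃ z, (¬ z ≤ e ∧ ¬ e ≤ z) ∧ y ≤ z) → T x y = ⊥) := by
  intro x y hx ⟨hy0, hye, z, ⟨hz1, hz2⟩, hyz⟩
  have hUxy : U x y = T x y := by
    rw [hU]; simp [hx.le, hye.le]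
  have hUxz : U x z = ⊥ := by
    rw [hU]
    have h1 : ¬ (x ≤ e ∧ z ≤ e) := fun h => hz1 h.2
    have h2 : ¬ e ≤ x := fun h => hx.ne (le_antisymm hx.le h)
    simp [h1, h2, hx, hz1, hz2]
  have := (huni.2.2.1 y z x hyz).2
  rw [hUxy, hUxz] at this
  exact le_bot_iff.mp this
end

section
/- Let $(L,\leq,0,1)$ be a bounded lattice, $e\in L\setminus\{0,1\}$, $I_e=\{x: x\parallel e\}$, and let $T_e$ be a t-norm on $[0,e]$. Define $U_{T_e}$ as: $T_e(x,y)$ on $[0,e]^2$; $y$ on $[e,1]\times I_e$; $x$ on $I_e\times[e,1]$; $0$ on $([0,e)\times I_e)\cup(I_e\times[0,e))$; $x\wedge y$ on $([0,e)\times[e,1])\cup([e,1]\times[0,e))\cup(I_e\times I_e)$; $x\vee y$ otherwise. If $U_{T_e}$ is associative, then $\{y\wedge z: y,z\in I_e\}\subseteq I_e\cup\{0\}$. -/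
open Classical in
theorem stmt13 {L : Type*} [Lattice L] [BoundedOrder L] (e : L)
    (he0 : e ≠ ⊥) (he1 : e ≠ ⊤)
    (T : L → L → L)
    (hTcl : ∀ x y, x ≤ e → y ≤ e → T x y ≤ e)
    (hTcomm : ∀ x y, x ≤ e → y ≤ e → T x y = T y x)
    (hTassoc : ∀ x y z, x ≤ e → y ≤ e → z ≤ e → T (T x y) z = T x (T y z))
    (hTmono : ∀ x y z, x ≤ e → y ≤ e → z ≤ e → x ≤ y → T x z ≤ T y z)
    (hTe : ∀ x, x ≤ e → T e x = x ∧ T x e = x)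
    (U : L → L → L)
    (hU : ∀ x y, U x y =
      if x ≤ e ∧ y ≤ e then T x y
      else if e ≤ x ∧ (¬ y ≤ e ∧ ¬ e ≤ y) then y
      else if (¬ x ≤ e ∧ ¬ e ≤ x) ∧ e ≤ y then x
      else if (x < e ∧ (¬ y ≤ e ∧ ¬ e ≤ y)) ∨ ((¬ x ≤ e ∧ ¬ e ≤ x) ∧ y < e) then (⊥ : L)
      else if (x < e ∧ e ≤ y) ∨ (e ≤ x ∧ y < e) ∨
          ((¬ x ≤ e ∧ ¬ e ≤ x) ∧ (¬ y ≤ e ∧ ¬ e ≤ y)) then x ⊓ y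
      else x ⊔ y)
    (hassoc : ∀ x y z, U (U x y) z = U x (U y z)) :
    (∀ y z, (¬ y ≤ e ∧ ¬ e ≤ y) → (¬ z ≤ e ∧ ¬ e ≤ z) →
      (¬ y ⊓ z ≤ e ∧ ¬ e ≤ y ⊓ z) ∨ y ⊓ z = ⊥) := by
  intro y z hy hz
  have hynlt : ¬ y < e := fun h => hy.1 h.le
  have hznlt : ¬ z < e := fun h => hz.1 h.le
  have hew : ¬ e ≤ y ⊓ z := fun h => hy.2 (h.trans inf_le_left)
  by_cases hwe : y ⊓ z ≤ e
  · right
    have hlt : y ⊓ z < e :=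
      lt_of_le_of_ne hwe (fun h => hz.2 (h ▸ (inf_le_right : y ⊓ z ≤ z)))
    have h1 : U y z = y ⊓ z := by
      rw [hU]
      simp [hy.1, hy.2, hz.1, hz.2, hynlt, hznlt]
    have h2 : U z z = z := by
      rw [hU]
      simp [hz.1, hz.2, hznlt]
    have h3 : U (y ⊓ z) z = ⊥ := by
      rw [hU]
      simp [hwe, hz.1, hz.2, hlt, not_le_of_gt hlt]
    have := hassoc y z z
    rw [h1, h2, h1, h3] at this
    exact this.symm
  · exact Or.inl ⟨hwe, hew⟩
end

section
/- Let $(L,\leq,0,1)$ be a bounded lattice, $e\in L\setminus\{0,1\}$, $I_e=\{x: x\parallel e\}$, $\mathscr{P}=\{x\in(0,e): \exists z\in I_e,\ x\leq z\}$, and let $T_e$ be a t-norm on $[0,e]$. Define $U_{T_e}$ as: $T_e(x,y)$ on $[0,e]^2$; $y$ on $[e,1]\times I_e$; $x$ on $I_e\times[e,1]$; $0$ on $([0,e)\times I_e)\cup(I_e\times[0,e))$; $x\wedge y$ on $([0,e)\times[e,1])\cup([e,1]\times[0,e))\cup(I_e\times I_e)$; $x\vee y$ otherwise. Then $U_{T_e}$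 is a uninorm on $L$ with neutral element $e$ if and only if both (a) $T_e(x,y)=0$ whenever $x\in[0,e)$ and $y\in\mathscr{P}$ (vacuously if $\mathscr{P}=\emptyset$), and (b) $\{y\wedge z: y,z\in I_e\}\subseteq I_e\cup\{0\}$. -/
open Classical in
theorem stmt14 {L : Type*} [Lattice L] [BoundedOrder L] (e : L)
    (he0 : e ≠ ⊥) (he1 : e ≠ ⊤)
    (T : L → L → L)
    (hTcl : ∀ x y, x ≤ e → y ≤ e → T x y ≤ e)
    (hTcomm : ∀ x y, x ≤ e → y ≤ e → T x y = T y x)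
    (hTassoc : ∀ x y z, x ≤ e → y ≤ e → z ≤ e → T (T x y) z = T x (T y z))
    (hTmono : ∀ x y z, x ≤ e → y ≤ e → z ≤ e → x ≤ y → T x z ≤ T y z)
    (hTe : ∀ x, x ≤ e → T e x = x ∧ T x e = x)
    (U : L → L → L)
    (hU : ∀ x y, U x y =
      if x ≤ e ∧ y ≤ e then T x y
      else if e ≤ x ∧ (¬ y ≤ e ∧ ¬ e ≤ y) then y
      else if (¬ x ≤ e ∧ ¬ e ≤ x) ∧ e ≤ y then x
      else if (x < e ∧ (¬ y ≤ e ∧ ¬ e ≤ y)) ∨ ((¬ x ≤ e ∧ ¬ e ≤ x) ∧ y < e) then (⊥ : L)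
      else if (x < e ∧ e ≤ y) ∨ (e ≤ x ∧ y < e) ∨
          ((¬ x ≤ e ∧ ¬ e ≤ x) ∧ (¬ y ≤ e ∧ ¬ e ≤ y)) then x ⊓ y
      else x ⊔ y) :
    ((∀ x y, U x y = U y x) ∧
      (∀ x y z, U (U x y) z = U x (U y z)) ∧
      (∀ x y z, x ≤ y → U x z ≤ U y z ∧ U z x ≤ U z y) ∧
      (∀ x, U e x = x ∧ U x e = x)) ↔
    ((∀ x y, x < e → (⊥ < y ∧ y < e ∧ ∃ z, (¬ z ≤ e ∧ ¬ e ≤ z) ∧ y ≤ z) → T x y = ⊥) ∧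
     (∀ y z, (¬ y ≤ e ∧ ¬ e ≤ y) → (¬ z ≤ e ∧ ¬ e ≤ z) →
      (¬ y ⊓ z ≤ e ∧ ¬ e ≤ y ⊓ z) ∨ y ⊓ z = ⊥)) := by
  have tri : ∀ a : L, a < e ∨ e ≤ a ∨ (¬ a ≤ e ∧ ¬ e ≤ a) := by
    intro a
    by_cases h1 : a ≤ e
    · rcases h1.lt_or_eq with h | h
      · exact Or.inl h
      · exact Or.inr (Or.inl h.ge)
    · by_cases h2 : e ≤ a
      · exact Or.inr (Or.inl h2)
      · exact Or.inr (Or.inr ⟨h1, h2⟩)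
  have Ull : ∀ x y, x < e → y ≤ e → U x y = T x y := by
    intro x y hx hy; rw [hU, if_pos ⟨hx.le, hy⟩]
  have Ulg : ∀ x y, x < e → e ≤ y → U x y = x := by
    intro x y hx hy
    have hx1 : ¬ e ≤ x := hx.not_ge
    have hx2 : x ≤ e := hx.le
    by_cases hye : y ≤ e
    · have hyeq : y = e := le_antisymm hye hy
      rw [hyeq, Ull x e hx le_rfl, (hTe x hx.le).2]
    · rw [hU, if_neg (by tauto), if_neg (by tauto), if_neg (by tauto),
        if_neg (by tauto), if_pos (Or.inl ⟨hx, hy⟩)]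
      exact inf_eq_left.mpr (hx.le.trans hy)
  have Uli : ∀ x y, x < e → ¬ y ≤ e → ¬ e ≤ y → U x y = ⊥ := by
    intro x y hx hy1 hy2
    have hx1 : ¬ e ≤ x := hx.not_ge
    have hx2 : x ≤ e := hx.le
    rw [hU, if_neg (by tauto), if_neg (by tauto), if_neg (by tauto),
      if_pos (Or.inl ⟨hx, hy1, hy2⟩)]
  have Ugg : ∀ x y, e ≤ x → e ≤ y → U x y = x ⊔ y := by
    intro x y hx hy
    have hx' : ¬ x < e := fun h => h.not_ge hx
    have hy' : ¬ y < e := fun h => h.not_ge hy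
    rw [hU]
    by_cases h1 : x ≤ e ∧ y ≤ e
    · rw [if_pos h1]
      have hx1 : x = e := le_antisymm h1.1 hx
      have hy1 : y = e := le_antisymm h1.2 hy
      rw [hx1, hy1, (hTe e le_rfl).1]
      simp
    · rw [if_neg h1, if_neg (by tauto), if_neg (by tauto),
        if_neg (by tauto), if_neg (by tauto)]
  have Ugo : ∀ x y, e ≤ x → ¬ e ≤ y → U x y = y := by
    intro x y hx hy
    have hx' : ¬ x < e := fun h => h.not_ge hx
    by_cases hy1 : y ≤ e
    · have hylt : y < e := lt_of_le_of_ne hy1 (fun h => hy (h ▸ le_rfl))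
      by_cases hx1 : x ≤ e
      · have hxeq : x = e := le_antisymm hx1 hx
        rw [hxeq, hU, if_pos ⟨le_rfl, hy1⟩, (hTe y hy1).1]
      · rw [hU, if_neg (by tauto), if_neg (by tauto), if_neg (by tauto),
          if_neg (by tauto), if_pos (Or.inr (Or.inl ⟨hx, hylt⟩))]
        exact inf_eq_right.mpr (hy1.trans hx)
    · rw [hU, if_neg (by tauto), if_pos ⟨hx, hy1, hy⟩]
  have Uig : ∀ x y, ¬ x ≤ e → ¬ e ≤ x → e ≤ y → U x y = x := by
    intro x y hx1 hx2 hy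
    rw [hU, if_neg (by tauto), if_neg (by tauto), if_pos ⟨⟨hx1, hx2⟩, hy⟩]
  have Uil : ∀ x y, ¬ x ≤ e → ¬ e ≤ x → y < e → U x y = ⊥ := by
    intro x y hx1 hx2 hy
    have hy1 : ¬ e ≤ y := hy.not_ge
    have hy2 : y ≤ e := hy.le
    rw [hU, if_neg (by tauto), if_neg (by tauto), if_neg (by tauto),
      if_pos (Or.inr ⟨⟨hx1, hx2⟩, hy⟩)]
  have Uii : ∀ x y, ¬ x ≤ e → ¬ e ≤ x → ¬ y ≤ e → ¬ e ≤ y → U x y = x ⊓ y := by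
    intro x y hx1 hx2 hy1 hy2
    have hx' : ¬ x < e := fun h => hx1 h.le
    have hy' : ¬ y < e := fun h => hy1 h.le
    rw [hU, if_neg (by tauto), if_neg (by tauto), if_neg (by tauto),
      if_neg (by tauto), if_pos (Or.inr (Or.inr ⟨⟨hx1, hx2⟩, ⟨hy1, hy2⟩⟩))]
  have hbote : (⊥ : L) < e := he0.bot_lt
  have hTlely : ∀ x y, x ≤ e → y ≤ e → T x y ≤ y := by
    intro x y hx hy
    have := hTmono x e y hx le_rfl hy hx
    rwa [(hTe y hy).1] at this
  have hTlelx : ∀ x y, x ≤ e → y ≤ e → T x y ≤ x := by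
    intro x y hx hy
    rw [hTcomm x y hx hy]; exact hTlely y x hy hx
  have hTbot : ∀ x, x ≤ e → T x ⊥ = ⊥ := by
    intro x hx
    exact le_bot_iff.mp (hTlely x ⊥ hx bot_le)
  have hTbot' : ∀ x, x ≤ e → T ⊥ x = ⊥ := by
    intro x hx
    exact le_bot_iff.mp (hTlelx ⊥ x bot_le hx)
  have Ubotl : ∀ y, U ⊥ y = ⊥ := by
    intro y
    rcases tri y with h | h | ⟨h1, h2⟩
    · rw [Ull ⊥ y hbote h.le]; exact hTbot' y h.le
    · exact Ulg ⊥ y hbote h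
    · exact Uli ⊥ y hbote h1 h2
  have Ubotr : ∀ y, U y ⊥ = ⊥ := by
    intro y
    rcases tri y with h | h | ⟨h1, h2⟩
    · rw [Ull y ⊥ h bot_le]; exact hTbot y h.le
    · exact Ugo y ⊥ h (fun h2 => he0 (le_bot_iff.mp h2))
    · exact Uil y ⊥ h1 h2 hbote
  have hcomm : ∀ x y, U x y = U y x := by
    intro x y
    rcases tri x with hx | hx | ⟨hx1, hx2⟩ <;> rcases tri y with hy | hy | ⟨hy1, hy2⟩
    · rw [Ull x y hx hy.le, Ull y x hy hx.le]; exact hTcomm x y hx.le hy.le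
    · rw [Ulg x y hx hy, Ugo y x hy hx.not_ge]
    · rw [Uli x y hx hy1 hy2, Uil y x hy1 hy2 hx]
    · rw [Ugo x y hx hy.not_ge, Ulg y x hy hx]
    · rw [Ugg x y hx hy, Ugg y x hy hx, sup_comm]
    · rw [Ugo x y hx hy2, Uig y x hy1 hy2 hx]
    · rw [Uil x y hx1 hx2 hy, Uli y x hy hx1 hx2]
    · rw [Uig x y hx1 hx2 hy, Ugo y x hy hx2]
    · rw [Uii x y hx1 hx2 hy1 hy2, Uii y x hy1 hy2 hx1 hx2, inf_comm]
  have hneut : ∀ x, U e x = x ∧ U x e = x := by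
    intro x
    rcases tri x with hx | hx | ⟨hx1, hx2⟩
    · constructor
      · rw [Ugo e x le_rfl hx.not_ge]
      · rw [Ull x e hx le_rfl]; exact (hTe x hx.le).2
    · constructor
      · rw [Ugg e x le_rfl hx]; exact sup_eq_right.mpr hx
      · rw [Ugg x e hx le_rfl]; exact sup_eq_left.mpr hx
    · constructor
      · rw [Ugo e x le_rfl hx2]
      · rw [Uig x e hx1 hx2 le_rfl]
  constructor
  · rintro ⟨-, Hassoc, Hmono, -⟩
    constructor
    · rintro x y hx ⟨hy0, hye, z, ⟨hz1, hz2⟩, hyz⟩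
      have h1 : U x y ≤ U x z := (Hmono y z x hyz).2
      rw [Ull x y hx hye.le, Uli x z hx hz1 hz2] at h1
      exact le_bot_iff.mp h1
    · rintro y z ⟨hy1, hy2⟩ ⟨hz1, hz2⟩
      by_cases hw1 : e ≤ y ⊓ z
      · exact absurd (hw1.trans inf_le_left) hy2
      by_cases hw2 : y ⊓ z ≤ e
      · right
        by_contra hwbot
        have hwlt : y ⊓ z < e := lt_of_le_of_ne hw2 (fun h => hy2 (h ▸ inf_le_left))
        have h3 := Hassoc y z z
        rw [Uii y z hy1 hy2 hz1 hz2, Uii z z hz1 hz2 hz1 hz2, inf_idem,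
            Uii y z hy1 hy2 hz1 hz2, Uli _ z hwlt hz1 hz2] at h3
        exact hwbot h3.symm
      · left; exact ⟨hw2, hw1⟩
  · rintro ⟨Ha, Hb⟩
    have hTlt : ∀ a b, a < e → b ≤ e → T a b < e := fun a b ha hb =>
      lt_of_le_of_lt (hTlelx a b ha.le hb) ha
    have hmono1 : ∀ x y z, x ≤ y → U x z ≤ U y z := by
      intro x y z hxy
      rcases tri x with hx | hx | ⟨hx1, hx2⟩
      · rcases tri y with hy | hy | ⟨hy1, hy2⟩
        · rcases tri z with hz | hz | ⟨hz1, hz2⟩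
          · rw [Ull x z hx hz.le, Ull y z hy hz.le]
            exact hTmono x y z hx.le hy.le hz.le hxy
          · rw [Ulg x z hx hz, Ulg y z hy hz]; exact hxy
          · rw [Uli x z hx hz1 hz2, Uli y z hy hz1 hz2]
        · rcases tri z with hz | hz | ⟨hz1, hz2⟩
          · rw [Ull x z hx hz.le, Ugo y z hy hz.not_ge]
            exact hTlely x z hx.le hz.le
          · rw [Ulg x z hx hz, Ugg y z hy hz]
            exact hx.le.trans (hy.trans le_sup_left)
          · rw [Uli x z hx hz1 hz2, Ugo y z hy hz2]; exact bot_le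
        · rcases tri z with hz | hz | ⟨hz1, hz2⟩
          · rw [Ull x z hx hz.le, Uil y z hy1 hy2 hz]
            rcases eq_or_ne x ⊥ with hxb | hxb
            · rw [hxb, hTbot' z hz.le]
            · have hxP : (⊥ : L) < x := lt_of_le_of_ne bot_le (Ne.symm hxb)
              rw [hTcomm x z hx.le hz.le,
                Ha z x hz ⟨hxP, hx, y, ⟨hy1, hy2⟩, hxy⟩]
          · rw [Ulg x z hx hz, Uig y z hy1 hy2 hz]; exact hxy
          · rw [Uli x z hx hz1 hz2, Uii y z hy1 hy2 hz1 hz2]; exact bot_le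
      · have hy : e ≤ y := hx.trans hxy
        rcases tri z with hz | hz | ⟨hz1, hz2⟩
        · rw [Ugo x z hx hz.not_ge, Ugo y z hy hz.not_ge]
        · rw [Ugg x z hx hz, Ugg y z hy hz]; exact sup_le_sup_right hxy z
        · rw [Ugo x z hx hz2, Ugo y z hy hz2]
      · rcases tri y with hy | hy | ⟨hy1, hy2⟩
        · exact absurd (hxy.trans hy.le) hx1
        · rcases tri z with hz | hz | ⟨hz1, hz2⟩
          · rw [Uil x z hx1 hx2 hz, Ugo y z hy hz.not_ge]; exact bot_le
          · rw [Uig x z hx1 hx2 hz, Ugg y z hy hz]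
            exact hxy.trans le_sup_left
          · rw [Uii x z hx1 hx2 hz1 hz2, Ugo y z hy hz2]; exact inf_le_right
        · rcases tri z with hz | hz | ⟨hz1, hz2⟩
          · rw [Uil x z hx1 hx2 hz, Uil y z hy1 hy2 hz]
          · rw [Uig x z hx1 hx2 hz, Uig y z hy1 hy2 hz]; exact hxy
          · rw [Uii x z hx1 hx2 hz1 hz2, Uii y z hy1 hy2 hz1 hz2]
            exact inf_le_inf_right z hxy
    have hassoc : ∀ x y z, U (U x y) z = U x (U y z) := by
      intro x y z
      rcases tri x with hx | hx | ⟨hx1, hx2⟩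
      · rcases tri y with hy | hy | ⟨hy1, hy2⟩
        · rcases tri z with hz | hz | ⟨hz1, hz2⟩
          · rw [Ull x y hx hy.le, Ull y z hy hz.le,
              Ull _ z (hTlt x y hx hy.le) hz.le, Ull x _ hx (hTlt y z hy hz.le).le]
            exact hTassoc x y z hx.le hy.le hz.le
          · rw [Ull x y hx hy.le, Ulg y z hy hz,
              Ulg _ z (hTlt x y hx hy.le) hz, Ull x y hx hy.le]
          · rw [Ull x y hx hy.le, Uli y z hy hz1 hz2,
              Uli _ z (hTlt x y hx hy.le) hz1 hz2, Ubotr x]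
        · rcases tri z with hz | hz | ⟨hz1, hz2⟩
          · rw [Ulg x y hx hy, Ugo y z hy hz.not_ge, Ull x z hx hz.le]
          · rw [Ulg x y hx hy, Ugg y z hy hz, Ulg x z hx hz,
              Ulg x _ hx (hy.trans le_sup_left)]
          · rw [Ulg x y hx hy, Ugo y z hy hz2, Uli x z hx hz1 hz2]
        · rcases tri z with hz | hz | ⟨hz1, hz2⟩
          · rw [Uli x y hx hy1 hy2, Uil y z hy1 hy2 hz, Ubotl z, Ubotr x]
          · rw [Uli x y hx hy1 hy2, Uig y z hy1 hy2 hz, Ubotl z,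
              Uli x y hx hy1 hy2]
          · rw [Uli x y hx hy1 hy2, Uii y z hy1 hy2 hz1 hz2, Ubotl z]
            rcases Hb y z ⟨hy1, hy2⟩ ⟨hz1, hz2⟩ with ⟨hw1, hw2⟩ | hw
            · rw [Uli x _ hx hw1 hw2]
            · rw [hw, Ubotr x]
      · rcases tri y with hy | hy | ⟨hy1, hy2⟩
        · rcases tri z with hz | hz | ⟨hz1, hz2⟩
          · rw [Ugo x y hx hy.not_ge, Ull y z hy hz.le,
              Ugo x _ hx (hTlt y z hy hz.le).not_ge]
          · rw [Ugo x y hx hy.not_ge, Ulg y z hy hz, Ugo x y hx hy.not_ge]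
          · rw [Ugo x y hx hy.not_ge, Uli y z hy hz1 hz2, Ubotr x]
        · rcases tri z with hz | hz | ⟨hz1, hz2⟩
          · rw [Ugg x y hx hy, Ugo y z hy hz.not_ge,
              Ugo _ z (hx.trans le_sup_left) hz.not_ge, Ugo x z hx hz.not_ge]
          · rw [Ugg x y hx hy, Ugg y z hy hz, Ugg _ z (hx.trans le_sup_left) hz,
              Ugg x _ hx (hy.trans le_sup_left), sup_assoc]
          · rw [Ugg x y hx hy, Ugo y z hy hz2,
              Ugo _ z (hx.trans le_sup_left) hz2, Ugo x z hx hz2]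
        · rcases tri z with hz | hz | ⟨hz1, hz2⟩
          · rw [Ugo x y hx hy2, Uil y z hy1 hy2 hz, Ubotr x]
          · rw [Ugo x y hx hy2, Uig y z hy1 hy2 hz, Ugo x y hx hy2]
          · rw [Ugo x y hx hy2, Uii y z hy1 hy2 hz1 hz2]
            rcases Hb y z ⟨hy1, hy2⟩ ⟨hz1, hz2⟩ with ⟨hw1, hw2⟩ | hw
            · rw [Ugo x _ hx hw2]
            · rw [hw, Ubotr x]
      · rcases tri y with hy | hy | ⟨hy1, hy2⟩
        · rcases tri z with hz | hz | ⟨hz1, hz2⟩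
          · rw [Uil x y hx1 hx2 hy, Ull y z hy hz.le, Ubotl z,
              Uil x _ hx1 hx2 (hTlt y z hy hz.le)]
          · rw [Uil x y hx1 hx2 hy, Ulg y z hy hz, Ubotl z, Uil x y hx1 hx2 hy]
          · rw [Uil x y hx1 hx2 hy, Uli y z hy hz1 hz2, Ubotl z, Ubotr x]
        · rcases tri z with hz | hz | ⟨hz1, hz2⟩
          · rw [Uig x y hx1 hx2 hy, Ugo y z hy hz.not_ge]
          · rw [Uig x y hx1 hx2 hy, Ugg y z hy hz, Uig x z hx1 hx2 hz,
              Uig x _ hx1 hx2 (hy.trans le_sup_left)]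
          · rw [Uig x y hx1 hx2 hy, Ugo y z hy hz2]
        · rcases tri z with hz | hz | ⟨hz1, hz2⟩
          · rw [Uii x y hx1 hx2 hy1 hy2, Uil y z hy1 hy2 hz, Ubotr x]
            rcases Hb x y ⟨hx1, hx2⟩ ⟨hy1, hy2⟩ with ⟨hw1, hw2⟩ | hw
            · rw [Uil _ z hw1 hw2 hz]
            · rw [hw, Ubotl z]
          · rw [Uii x y hx1 hx2 hy1 hy2, Uig y z hy1 hy2 hz,
              Uii x y hx1 hx2 hy1 hy2]
            rcases Hb x y ⟨hx1, hx2⟩ ⟨hy1, hy2⟩ with ⟨hw1, hw2⟩ | hw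
            · rw [Uig _ z hw1 hw2 hz]
            · rw [hw, Ubotl z]
          · rw [Uii x y hx1 hx2 hy1 hy2, Uii y z hy1 hy2 hz1 hz2]
            rcases Hb x y ⟨hx1, hx2⟩ ⟨hy1, hy2⟩ with ⟨ha1, ha2⟩ | ha <;>
              rcases Hb y z ⟨hy1, hy2⟩ ⟨hz1, hz2⟩ with ⟨hb1, hb2⟩ | hb
            · rw [Uii _ z ha1 ha2 hz1 hz2, Uii x _ hx1 hx2 hb1 hb2, inf_assoc]
            · rw [Uii _ z ha1 ha2 hz1 hz2, inf_assoc, hb, inf_bot_eq, Ubotr x]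
            · rw [ha, Ubotl z, Uii x _ hx1 hx2 hb1 hb2, ← inf_assoc, ha,
                bot_inf_eq]
            · rw [ha, hb, Ubotl z, Ubotr x]
    refine ⟨hcomm, hassoc, fun x y z h => ⟨hmono1 x y z h, ?_⟩, hneut⟩
    rw [hcomm z x, hcomm z y]
    exact hmono1 x y z h
end

section
/- Let $(L,\leq,0,1)$ be a bounded lattice, $e\in L\setminus\{0,1\}$, $I_e=\{x: x\parallel e\}$, and let $S_e$ be a t-conorm on $[e,1]$. Define $U_{S_e}(x,y)=S_e(x,y)$ on $[e,1]^2$; $y$ on $[e,1]\times I_e$; $x$ on $I_e\times[e,1]$; $0$ on $([0,e)\times I_e)\cup(I_e\times[0,e))$; $x\wedge y$ on $([0,e)\times[e,1])\cup([e,1]\times[0,e))\cup(I_e\times I_e)$; $x\vee y$ otherwise. If $U_{S_e}$ is increasing in each variable, then no element of $(0,e]$ lies below any element of $I_e$, i.e., $\{x\in(0,e): \exists z\in I_e,\ x\leq z\}=\emptyset$. -/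
open Classical in
theorem stmt15 {L : Type*} [Lattice L] [BoundedOrder L] (e : L)
    (he0 : e ≠ ⊥) (he1 : e ≠ ⊤)
    (S : L → L → L)
    (hScl : ∀ x y, e ≤ x → e ≤ y → e ≤ S x y)
    (hScomm : ∀ x y, e ≤ x → e ≤ y → S x y = S y x)
    (hSassoc : ∀ x y z, e ≤ x → e ≤ y → e ≤ z → S (S x y) z = S x (S y z))
    (hSmono : ∀ x y z, e ≤ x → e ≤ y → e ≤ z → x ≤ y → S x z ≤ S y z)
    (hSe : ∀ x, e ≤ x → S e x = x ∧ S x e = x)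
    (U : L → L → L)
    (hU : ∀ x y, U x y =
      if e ≤ x ∧ e ≤ y then S x y
      else if e ≤ x ∧ (¬ y ≤ e ∧ ¬ e ≤ y) then y
      else if (¬ x ≤ e ∧ ¬ e ≤ x) ∧ e ≤ y then x
      else if (x < e ∧ (¬ y ≤ e ∧ ¬ e ≤ y)) ∨ ((¬ x ≤ e ∧ ¬ e ≤ x) ∧ y < e) then (⊥ : L)
      else if (x < e ∧ e ≤ y) ∨ (e ≤ x ∧ y < e) ∨
          ((¬ x ≤ e ∧ ¬ e ≤ x) ∧ (¬ y ≤ e ∧ ¬ e ≤ y)) then x ⊓ y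
      else x ⊔ y)
    (hmono : ∀ x y z, x ≤ y → U x z ≤ U y z ∧ U z x ≤ U z y) :
    ∀ x, ⊥ < x → x < e → ∀ z, (¬ z ≤ e ∧ ¬ e ≤ z) → ¬ x ≤ z := by
  intro x hx0 hxe z hz hxz
  have hnex : ¬ e ≤ x := fun h => absurd (lt_of_le_of_lt h hxe) (lt_irrefl e)
  have hxx : U x x = x := by
    rw [hU]
    have hle : x ≤ e := hxe.le
    rw [if_neg (by tauto), if_neg (by tauto), if_neg (by tauto),
      if_neg (by tauto), if_neg (by tauto), sup_idem]
  have hzx : U z x = ⊥ := by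
    rw [hU]
    have hnez : ¬ e ≤ z := hz.2
    have hnex' : ¬ e ≤ x := hnex
    rw [if_neg (by tauto), if_neg (by tauto), if_neg (by tauto), if_pos (Or.inr ⟨hz, hxe⟩)]
  have := (hmono x z x hxz).1
  rw [hxx, hzx] at this
  exact absurd (le_antisymm this bot_le) (ne_of_gt hx0)
end

section
/- Consider the bounded lattice $L_1=\{0,e,b,a,1\}$ with order relations $0<e<a<1$, $0<b<a$, and $b\parallel e$ (so $I_e=\{b\}$). Let $S_e(x,y)=x\vee y$ on $\{e,a,1\}=[e,1]$. Define $U_S(x,y)=0$ on $[0,e)^2$; $S_e(x,y)$ on $[e,1]^2$; $y$ on $[0,e]\times I_e$; $x$ on $I_e\times[0,e]$; $x\wedge y$ otherwise. Then $U_S$ is not increasing: $U_S(0,a)=0 < b = U_S(0,b)$ although $b\leq a$. In particular, $U_S$ is not a uninorm on $L_1$. -/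
open Classical in
theorem stmt17 {L : Type*} [Lattice L] [BoundedOrder L]
    (e a b : L)
    (h0e : ⊥ < e) (hea : e < a) (ha1 : a < ⊤)
    (h0b : ⊥ < b) (hba : b < a)
    (hbe : ¬ b ≤ e) (heb : ¬ e ≤ b)
    (hcar : ∀ x : L, x = ⊥ ∨ x = e ∨ x = b ∨ x = a ∨ x = ⊤)
    (U : L → L → L)
    (hU : ∀ x y, U x y =
      if x < e ∧ y < e then (⊥ : L)
      else if e ≤ x ∧ e ≤ y then x ⊔ y
      else if x ≤ e ∧ (¬ y ≤ e ∧ ¬ e ≤ y) then y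
      else if (¬ x ≤ e ∧ ¬ e ≤ x) ∧ y ≤ e then x
      else x ⊓ y) :
    U ⊥ a = ⊥ ∧ U ⊥ b = b ∧
    ¬ (∀ x y z, x ≤ y → U z x ≤ U z y) ∧
    ¬ ((∀ x y, U x y = U y x) ∧
      (∀ x y z, U (U x y) z = U x (U y z)) ∧
      (∀ x y z, x ≤ y → U x z ≤ U y z ∧ U z x ≤ U z y) ∧
      (∀ x, U e x = x ∧ U x e = x)) := by
  have h1 : U ⊥ a = ⊥ := by
    rw [hU]
    rw [if_neg (fun h => absurd hea (not_lt_of_ge h.2.le)),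
        if_neg (fun h => absurd h.1 (not_le_of_gt h0e)),
        if_neg (fun h => h.2.2 hea.le),
        if_neg (fun h => h.1.1 bot_le)]
    exact bot_inf_eq a
  have h2 : U ⊥ b = b := by
    rw [hU]
    rw [if_neg (fun h => hbe h.2.le),
        if_neg (fun h => absurd h.1 (not_le_of_gt h0e)),
        if_pos ⟨bot_le, hbe, heb⟩]
  refine ⟨h1, h2, ?_, ?_⟩
  · intro h
    have := h b a ⊥ hba.le
    rw [h1, h2] at this
    exact absurd (le_bot_iff.mp this) (ne_of_gt h0b)
  · rintro ⟨_, _, hmono, _⟩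
    have := (hmono b a ⊥ hba.le).2
    rw [h1, h2] at this
    exact absurd (le_bot_iff.mp this) (ne_of_gt h0b)
end

section
/- Let $(L,\leq,0,1)$ be a bounded lattice and $e\in L\setminus\{0,1\}$ with $I_e=\{x: x\parallel e\}$. If $I_e=\emptyset$ (i.e., every element of $L$ is comparable with $e$), and $T_e$ is a t-norm on $[0,e]$, then the operation $U_T$ defined by $U_T(x,y)=T_e(x,y)$ on $[0,e]^2$, $U_T(x,y)=1$ on $(e,1]^2$, and $U_T(x,y)=x\vee y$ otherwise, is a uninorm on $L$ with neutral element $e$. -/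
open Classical in
theorem stmt19 {L : Type*} [Lattice L] [BoundedOrder L] (e : L)
    (he0 : e ≠ ⊥) (he1 : e ≠ ⊤)
    (hcomp : ∀ x : L, x ≤ e ∨ e ≤ x)
    (T : L → L → L)
    (hTcl : ∀ x y, x ≤ e → y ≤ e → T x y ≤ e)
    (hTcomm : ∀ x y, x ≤ e → y ≤ e → T x y = T y x)
    (hTassoc : ∀ x y z, x ≤ e → y ≤ e → z ≤ e → T (T x y) z = T x (T y z))
    (hTmono : ∀ x y z, x ≤ e → y ≤ e → z ≤ e → x ≤ y → T x z ≤ T y z)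
    (hTe : ∀ x, x ≤ e → T e x = x ∧ T x e = x)
    (U : L → L → L)
    (hU : ∀ x y, U x y =
      if x ≤ e ∧ y ≤ e then T x y
      else if e < x ∧ e < y then (⊤ : L)
      else x ⊔ y) :
    (∀ x y, U x y = U y x) ∧
    (∀ x y z, U (U x y) z = U x (U y z)) ∧
    (∀ x y z, x ≤ y → U x z ≤ U y z ∧ U z x ≤ U z y) ∧
    (∀ x, U e x = x ∧ U x e = x) := by
  have htop : e < ⊤ := Ne.lt_top he1
  have hcases : ∀ x : L, x ≤ e ∨ e < x := by
    intro x
    by_cases hx : x ≤ e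
    · exact Or.inl hx
    · exact Or.inr (lt_of_le_not_ge ((hcomp x).resolve_left hx) hx)
  have hUll : ∀ x y, x ≤ e → y ≤ e → U x y = T x y := by
    intro x y hx hy; rw [hU]; simp [hx, hy]
  have hUlg : ∀ x y, x ≤ e → e < y → U x y = y := by
    intro x y hx hy; rw [hU]
    have h1 : ¬ y ≤ e := not_le_of_gt hy
    have h2 : ¬ e < x := not_lt_of_ge hx
    simp [h1, h2, sup_eq_right.mpr (hx.trans hy.le)]
  have hUgl : ∀ x y, e < x → y ≤ e → U x y = x := by
    intro x y hx hy; rw [hU]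
    have h1 : ¬ x ≤ e := not_le_of_gt hx
    have h2 : ¬ e < y := not_lt_of_ge hy
    simp [h1, h2, sup_eq_left.mpr (hy.trans hx.le)]
  have hUgg : ∀ x y, e < x → e < y → U x y = ⊤ := by
    intro x y hx hy; rw [hU]
    have h1 : ¬ x ≤ e := not_le_of_gt hx
    simp [h1, hx, hy]
  refine ⟨?_, ?_, ?_, ?_⟩
  · intro x y
    rcases hcases x with hx | hx <;> rcases hcases y with hy | hy
    · rw [hUll _ _ hx hy, hUll _ _ hy hx, hTcomm _ _ hx hy]
    · rw [hUlg _ _ hx hy, hUgl _ _ hy hx]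
    · rw [hUgl _ _ hx hy, hUlg _ _ hy hx]
    · rw [hUgg _ _ hx hy, hUgg _ _ hy hx]
  · intro x y z
    rcases hcases x with hx | hx <;> rcases hcases y with hy | hy <;>
      rcases hcases z with hz | hz
    · rw [hUll _ _ hx hy, hUll _ _ (hTcl _ _ hx hy) hz, hUll _ _ hy hz,
        hUll _ _ hx (hTcl _ _ hy hz), hTassoc _ _ _ hx hy hz]
    · rw [hUll _ _ hx hy, hUlg _ _ (hTcl _ _ hx hy) hz, hUlg _ _ hy hz,
        hUlg _ _ hx hz]
    · rw [hUlg _ _ hx hy, hUgl _ _ hy hz, hUlg _ _ hx hy]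
    · rw [hUlg _ _ hx hy, hUgg _ _ hy hz, hUlg _ _ hx htop]
    · rw [hUgl _ _ hx hy, hUgl _ _ hx hz, hUll _ _ hy hz,
        hUgl _ _ hx (hTcl _ _ hy hz)]
    · rw [hUgl _ _ hx hy, hUgg _ _ hx hz, hUlg _ _ hy hz, hUgg _ _ hx hz]
    · rw [hUgg _ _ hx hy, hUgl _ _ htop hz, hUgl _ _ hy hz, hUgg _ _ hx hy]
    · rw [hUgg _ _ hx hy, hUgg _ _ htop hz, hUgg _ _ hy hz, hUgg _ _ hx htop]
  · intro x y z hxy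
    have key : ∀ a b c : L, a ≤ b → U a c ≤ U b c := by
      intro a b c hab
      rcases hcases a with ha | ha <;> rcases hcases b with hb | hb <;>
        rcases hcases c with hc | hc
      · rw [hUll _ _ ha hc, hUll _ _ hb hc]; exact hTmono _ _ _ ha hb hc hab
      · rw [hUlg _ _ ha hc, hUlg _ _ hb hc]
      · rw [hUll _ _ ha hc, hUgl _ _ hb hc]
        exact (hTcl _ _ ha hc).trans hb.le
      · rw [hUlg _ _ ha hc, hUgg _ _ hb hc]; exact le_top
      · exact absurd (ha.trans_le hab) (not_lt_of_ge hb)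
      · exact absurd (ha.trans_le hab) (not_lt_of_ge hb)
      · rw [hUgl _ _ ha hc, hUgl _ _ hb hc]; exact hab
      · rw [hUgg _ _ ha hc, hUgg _ _ hb hc]
    have comm : ∀ a b, U a b = U b a := by
      intro a b
      rcases hcases a with ha | ha <;> rcases hcases b with hb | hb
      · rw [hUll _ _ ha hb, hUll _ _ hb ha, hTcomm _ _ ha hb]
      · rw [hUlg _ _ ha hb, hUgl _ _ hb ha]
      · rw [hUgl _ _ ha hb, hUlg _ _ hb ha]
      · rw [hUgg _ _ ha hb, hUgg _ _ hb ha]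
    exact ⟨key _ _ _ hxy, by rw [comm z x, comm z y]; exact key _ _ _ hxy⟩
  · intro x
    rcases hcases x with hx | hx
    · rw [hUll _ _ le_rfl hx, hUll _ _ hx le_rfl]
      exact ⟨(hTe x hx).1, (hTe x hx).2⟩
    · rw [hUlg _ _ le_rfl hx, hUgl _ _ hx le_rfl]
      exact ⟨rfl, rfl⟩
end
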